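/- arXiv:1101.5842 — 9 statements merged into one kernel-verified Lean document; each statement's English description precedes it below -/
import Mathlib

section
/- The number of clock regions of a timed automaton with location set L and clock set C, where each clock x has maximal constant c_x, is bounded by |L| · ∏_{x∈C}(c_x+1) · |C|! · 2^{2|C|}. -/
/-- Region equivalence of clock valuations (Alur–Dill), with per-clock
maximal constants `c`. -/
def RegionEquiv {C : Type*} (c : C → ℕ) (κ₁ κ₂ : C → NNReal) : Prop :=
  (∀ x, (κ₁ x : ℝ) ≤ c x → (κ₂ x : ℝ) ≤ c x →
      ⌊(κ₁ x : ℝ)⌋ = ⌊(κ₂ x : ℝ)⌋) ∧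
  (∀ x y, (κ₁ x : ℝ) ≤ c x → (κ₁ y : ℝ) ≤ c y →
      (κ₂ x : ℝ) ≤ c x → (κ₂ y : ℝ) ≤ c y →
      (Int.fract (κ₁ x : ℝ) ≤ Int.fract (κ₁ y : ℝ) ↔
        Int.fract (κ₂ x : ℝ) ≤ Int.fract (κ₂ y : ℝ))) ∧
  (∀ x, (κ₁ x : ℝ) ≤ c x → (κ₂ x : ℝ) ≤ c x →
      (Int.fract (κ₁ x : ℝ) = 0 ↔ Int.fract (κ₂ x : ℝ) = 0)) ∧
  (∀ x, ((c x : ℝ) < κ₁ x ↔ (c x : ℝ) < κ₂ x))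

namespace RegionAux
set_option linter.unusedSectionVars false

/-- For a monotone sequence, equality of two values is equivalent to all
adjacent steps in between being equal. -/
lemma mono_eq_iff_adj {f : ℕ → ℝ} (hf : Monotone f) {p q : ℕ} (hpq : p ≤ q) :
    f p = f q ↔ ∀ m, p ≤ m → m < q → f m = f (m + 1) := by
  constructor
  · intro h m h1 h2
    have a1 := hf h1
    have a2 := hf (Nat.succ_le_of_lt h2)
    have a3 := hf (Nat.le_succ m)
    linarith [h ▸ a1, h ▸ a2]
  · intro h
    induction q, hpq using Nat.le_induction with
    | base => rfl
    | succ q hq ih =>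
      have := ih (fun m h1 h2 => h m h1 (by omega))
      rw [this]
      exact h q hq (by omega)

lemma mono_transfer_eq {f g : ℕ → ℝ} (hf : Monotone f) (hg : Monotone g)
    (h : ∀ m, (f m = f (m + 1) ↔ g m = g (m + 1))) (p q : ℕ) :
    f p = f q ↔ g p = g q := by
  rcases le_total p q with hpq | hpq
  · rw [mono_eq_iff_adj hf hpq, mono_eq_iff_adj hg hpq]
    exact forall_congr' fun m => by
      constructor <;> intro hh h1 h2 <;> [exact (h m).mp (hh h1 h2); exact (h m).mpr (hh h1 h2)]
  · rw [eq_comm, eq_comm (a := g p)]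
    rw [mono_eq_iff_adj hf hpq, mono_eq_iff_adj hg hpq]
    exact forall_congr' fun m => by
      constructor <;> intro hh h1 h2 <;> [exact (h m).mp (hh h1 h2); exact (h m).mpr (hh h1 h2)]

lemma mono_transfer_le {f g : ℕ → ℝ} (hf : Monotone f) (hg : Monotone g)
    (h : ∀ m, (f m = f (m + 1) ↔ g m = g (m + 1))) (p q : ℕ) :
    f p ≤ f q ↔ g p ≤ g q := by
  rcases le_total p q with hpq | hpq
  · simp [hf hpq, hg hpq]
  · have e := mono_transfer_eq hf hg h p q
    constructor
    · intro hh
      exact le_of_eq (e.mp (le_antisymm hh (hf hpq)))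
    · intro hh
      exact le_of_eq (e.mpr (le_antisymm hh (hg hpq)))

variable {C : Type*} [Fintype C] (c : C → ℕ) (κ : C → NNReal)

/-- Canonical key of a clock: its fractional part if below the max constant, else 2. -/
noncomputable def key (x : C) : ℝ :=
  if (κ x : ℝ) ≤ c x then Int.fract (κ x : ℝ) else 2

lemma key_of_below {x : C} (h : (κ x : ℝ) ≤ c x) : key c κ x = Int.fract (κ x : ℝ) :=
  if_pos h

lemma key_of_above {x : C} (h : ¬ (κ x : ℝ) ≤ c x) : key c κ x = 2 := if_neg h

lemma key_nonneg (x : C) : 0 ≤ key c κ x := by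
  unfold key; split
  · exact Int.fract_nonneg _
  · norm_num

/-- Strict linear "sorting" order on clocks: by key, ties broken by a fixed enumeration. -/
noncomputable def slt (x y : C) : Prop :=
  key c κ x < key c κ y ∨
    (key c κ x = key c κ y ∧ Fintype.equivFin C x < Fintype.equivFin C y)

lemma slt_irrefl (x : C) : ¬ slt c κ x x := by
  rintro (h | ⟨_, h⟩) <;> exact lt_irrefl _ h

lemma slt_trans {x y z : C} (h1 : slt c κ x y) (h2 : slt c κ y z) : slt c κ x z := by
  rcases h1 with h1 | ⟨h1, h1'⟩ <;> rcases h2 with h2 | ⟨h2, h2'⟩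
  · exact Or.inl (h1.trans h2)
  · exact Or.inl (h2 ▸ h1)
  · exact Or.inl (h1 ▸ h2)
  · exact Or.inr ⟨h1.trans h2, h1'.trans h2'⟩

lemma slt_trichotomy {x y : C} (h : x ≠ y) : slt c κ x y ∨ slt c κ y x := by
  rcases lt_trichotomy (key c κ x) (key c κ y) with hk | hk | hk
  · exact Or.inl (Or.inl hk)
  · rcases lt_or_gt_of_ne (fun he => h ((Fintype.equivFin C).injective he)) with he | he
    · exact Or.inl (Or.inr ⟨hk, he⟩)
    · exact Or.inr (Or.inr ⟨hk.symm, he⟩)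
  · exact Or.inr (Or.inl hk)

open Classical in
/-- Rank of a clock in the sorting order. -/
noncomputable def rank (x : C) : ℕ :=
  (Finset.univ.filter (fun y => slt c κ y x)).card

open Classical in
lemma rank_lt_card (x : C) : rank c κ x < Fintype.card C := by
  have : (Finset.univ.filter (fun y => slt c κ y x)) ⊂ Finset.univ := by
    refine Finset.ssubset_iff_of_subset (Finset.filter_subset _ _) |>.mpr ?_
    exact ⟨x, Finset.mem_univ x, by simp [slt_irrefl c κ x]⟩
  have h2 := Finset.card_lt_card this
  rw [Finset.card_univ] at h2
  exact h2

open Classical in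
lemma rank_lt_of_slt {x y : C} (h : slt c κ x y) : rank c κ x < rank c κ y := by
  apply Finset.card_lt_card
  constructor
  · intro z hz
    simp only [Finset.mem_filter, Finset.mem_univ, true_and] at hz ⊢
    exact slt_trans c κ hz h
  · intro hsub
    have := hsub (by simp [h] : x ∈ Finset.univ.filter (fun y' => slt c κ y' y))
    simp only [Finset.mem_filter] at this
    exact slt_irrefl c κ x this.2

lemma rank_injective : Function.Injective (rank c κ) := by
  intro x y h
  by_contra hxy
  rcases slt_trichotomy c κ hxy with hl | hl
  · exact absurd h (Nat.ne_of_lt (rank_lt_of_slt c κ hl))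
  · exact absurd h.symm (Nat.ne_of_lt (rank_lt_of_slt c κ hl))

/-- The canonical sorting bijection. -/
noncomputable def τ : C ≃ Fin (Fintype.card C) :=
  Equiv.ofBijective (fun x => ⟨rank c κ x, rank_lt_card c κ x⟩)
    ((Fintype.bijective_iff_injective_and_card _).mpr
      ⟨fun a b h => rank_injective c κ (by simpa using congrArg Fin.val h), by simp⟩)

lemma τ_apply (x : C) : (τ c κ x : ℕ) = rank c κ x := rfl

lemma key_le_of_τ_le {x y : C} (h : (τ c κ x : ℕ) ≤ (τ c κ y : ℕ)) :
    key c κ x ≤ key c κ y := by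
  by_contra hk
  push_neg at hk
  exact absurd h (Nat.not_le.mpr (rank_lt_of_slt c κ (Or.inl hk)))

/-- The chain of key values: position 0 is a sentinel 0, position m (1 ≤ m ≤ n)
is the key of the clock of rank m-1; constant beyond n. -/
noncomputable def ck (m : ℕ) : ℝ :=
  if h : m = 0 ∨ Fintype.card C = 0 then 0
  else key c κ ((τ c κ).symm ⟨min m (Fintype.card C) - 1, by omega⟩)

lemma ck_zero : ck c κ 0 = 0 := by simp [ck]

lemma ck_τ (x : C) : ck c κ ((τ c κ x : ℕ) + 1) = key c κ x := by
  have hn : (τ c κ x : ℕ) < Fintype.card C := (τ c κ x).isLt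
  have h : ¬((τ c κ x : ℕ) + 1 = 0 ∨ Fintype.card C = 0) := by omega
  rw [ck, dif_neg h]
  congr 1
  have : min ((τ c κ x : ℕ) + 1) (Fintype.card C) - 1 = (τ c κ x : ℕ) := by omega
  have h2 : (⟨min ((τ c κ x : ℕ) + 1) (Fintype.card C) - 1, by omega⟩ :
      Fin (Fintype.card C)) = τ c κ x := Fin.ext this
  rw [h2, Equiv.symm_apply_apply]

lemma ck_stable {m : ℕ} (h : Fintype.card C ≤ m) : ck c κ m = ck c κ (m + 1) := by
  rcases Nat.eq_zero_or_pos (Fintype.card C) with h0 | h0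
  · simp [ck, h0]
  · have h1 : ¬(m = 0 ∨ Fintype.card C = 0) := by omega
    have h2 : ¬(m + 1 = 0 ∨ Fintype.card C = 0) := by omega
    have h3 : min m (Fintype.card C) = min (m+1) (Fintype.card C) := by omega
    rw [ck, ck, dif_neg h1, dif_neg h2]
    simp [h3]

lemma ck_mono : Monotone (ck c κ) := by
  apply monotone_nat_of_le_succ
  intro m
  rcases Nat.eq_zero_or_pos (Fintype.card C) with h0 | h0
  · simp [ck, h0]
  rcases Nat.eq_zero_or_pos m with hm | hm
  · subst hm
    rw [ck_zero]
    rw [ck, dif_neg (by omega)]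
    exact key_nonneg c κ _
  · have h1 : ¬(m = 0 ∨ Fintype.card C = 0) := by omega
    have h2 : ¬(m + 1 = 0 ∨ Fintype.card C = 0) := by omega
    rw [ck, ck, dif_neg h1, dif_neg h2]
    apply key_le_of_τ_le
    rw [Equiv.apply_symm_apply, Equiv.apply_symm_apply]
    show min m _ - 1 ≤ min (m+1) _ - 1
    omega

open Classical in
/-- Tie bits: whether adjacent chain values are equal. -/
noncomputable def tie (i : Fin (Fintype.card C)) : Bool :=
  decide (ck c κ (i : ℕ) = ck c κ ((i : ℕ) + 1))

/-- Floor signature. -/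
noncomputable def floorSig (x : C) : Fin (c x + 1) :=
  if h : (κ x : ℝ) ≤ c x then
    ⟨(⌊(κ x : ℝ)⌋).toNat, by
      have h1 : ⌊(κ x : ℝ)⌋ ≤ (c x : ℤ) := by
        have := Int.floor_le_floor h
        simpa using this
      omega⟩
  else 0

open Classical in
/-- The full signature of a valuation. -/
noncomputable def sig (κ : C → NNReal) :
    ((x : C) → Fin (c x + 1)) × (C → Bool) × (C ≃ Fin (Fintype.card C)) ×
      (Fin (Fintype.card C) → Bool) :=
  (floorSig c κ, fun x => decide ((c x : ℝ) < κ x), τ c κ, tie c κ)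

section Congr

variable {κ₁ κ₂ : C → NNReal} (h : RegionEquiv c κ₁ κ₂)

include h in
lemma below_iff (x : C) : (κ₁ x : ℝ) ≤ c x ↔ (κ₂ x : ℝ) ≤ c x := by
  rw [← not_lt, ← not_lt]
  exact not_congr (h.2.2.2 x)

include h in
lemma key_lt_iff (x y : C) : (key c κ₁ x < key c κ₁ y) ↔ (key c κ₂ x < key c κ₂ y) := by
  have fr2 : ∀ (κ : C → NNReal) (z : C), Int.fract ((κ z : NNReal) : ℝ) < 2 :=
    fun κ z => (Int.fract_lt_one _).trans one_lt_two
  by_cases hx : (κ₁ x : ℝ) ≤ c x <;> by_cases hy : (κ₁ y : ℝ) ≤ c y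
  · have hx2 := (below_iff c h x).mp hx
    have hy2 := (below_iff c h y).mp hy
    rw [key_of_below c κ₁ hx, key_of_below c κ₁ hy,
      key_of_below c κ₂ hx2, key_of_below c κ₂ hy2, ← not_le, ← not_le]
    exact not_congr (h.2.1 y x hy hx hy2 hx2)
  · have hx2 := (below_iff c h x).mp hx
    have hy2 : ¬ (κ₂ y : ℝ) ≤ c y := fun hh => hy ((below_iff c h y).mpr hh)
    rw [key_of_below c κ₁ hx, key_of_above c κ₁ hy,
      key_of_below c κ₂ hx2, key_of_above c κ₂ hy2]
    exact iff_of_true (fr2 κ₁ x) (fr2 κ₂ x)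
  · have hx2 : ¬ (κ₂ x : ℝ) ≤ c x := fun hh => hx ((below_iff c h x).mpr hh)
    have hy2 := (below_iff c h y).mp hy
    rw [key_of_above c κ₁ hx, key_of_below c κ₁ hy,
      key_of_above c κ₂ hx2, key_of_below c κ₂ hy2]
    exact iff_of_false (by linarith [fr2 κ₁ y]) (by linarith [fr2 κ₂ y])
  · have hx2 : ¬ (κ₂ x : ℝ) ≤ c x := fun hh => hx ((below_iff c h x).mpr hh)
    have hy2 : ¬ (κ₂ y : ℝ) ≤ c y := fun hh => hy ((below_iff c h y).mpr hh)
    rw [key_of_above c κ₁ hx, key_of_above c κ₁ hy,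
      key_of_above c κ₂ hx2, key_of_above c κ₂ hy2]

include h in
lemma key_eq_iff (x y : C) : (key c κ₁ x = key c κ₁ y) ↔ (key c κ₂ x = key c κ₂ y) := by
  rw [le_antisymm_iff, le_antisymm_iff, ← not_lt, ← not_lt, ← not_lt (a := key c κ₂ y),
    ← not_lt (a := key c κ₂ x)]
  rw [not_congr (key_lt_iff c h y x), not_congr (key_lt_iff c h x y)]

include h in
lemma key_eq_zero_iff (x : C) : (key c κ₁ x = 0) ↔ (key c κ₂ x = 0) := by
  by_cases hx : (κ₁ x : ℝ) ≤ c x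
  · have hx2 := (below_iff c h x).mp hx
    rw [key_of_below c κ₁ hx, key_of_below c κ₂ hx2]
    exact h.2.2.1 x hx hx2
  · have hx2 : ¬ (κ₂ x : ℝ) ≤ c x := fun hh => hx ((below_iff c h x).mpr hh)
    rw [key_of_above c κ₁ hx, key_of_above c κ₂ hx2]

include h in
lemma τ_congr : τ c κ₁ = τ c κ₂ := by
  have hrank : ∀ x, rank c κ₁ x = rank c κ₂ x := by
    intro x
    classical
    unfold rank
    congr 1
    apply Finset.filter_congr
    intro y _
    unfold slt
    rw [key_lt_iff c h y x, key_eq_iff c h y x]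
  apply Equiv.ext
  intro x
  apply Fin.ext
  show rank c κ₁ x = rank c κ₂ x
  exact hrank x

include h in
lemma ck_eq_transfer (p q : ℕ) :
    (ck c κ₁ p = ck c κ₁ q) ↔ (ck c κ₂ p = ck c κ₂ q) := by
  have hτ := τ_congr c h
  simp only [ck, hτ]
  by_cases hp : p = 0 ∨ Fintype.card C = 0 <;> by_cases hq : q = 0 ∨ Fintype.card C = 0 <;>
    simp only [dif_pos, dif_neg, hp, hq, dite_true, dite_false]
  · have hz := key_eq_zero_iff c h ((τ c κ₂).symm ⟨q ⊓ Fintype.card C - 1, by omega⟩)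
    exact ⟨fun e => (hz.mp e.symm).symm, fun e => (hz.mpr e.symm).symm⟩
  · exact key_eq_zero_iff c h _
  · exact key_eq_iff c h _ _

include h in
lemma floorSig_congr : floorSig c κ₁ = floorSig c κ₂ := by
  funext x
  unfold floorSig
  by_cases hx : (κ₁ x : ℝ) ≤ c x
  · have hx2 := (below_iff c h x).mp hx
    rw [dif_pos hx, dif_pos hx2]
    exact Fin.ext (congrArg Int.toNat (h.1 x hx hx2))
  · have hx2 : ¬ (κ₂ x : ℝ) ≤ c x := fun hh => hx ((below_iff c h x).mpr hh)
    rw [dif_neg hx, dif_neg hx2]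

include h in
lemma tie_congr : tie c κ₁ = tie c κ₂ := by
  funext i
  unfold tie
  exact decide_eq_decide.mpr (ck_eq_transfer c h _ _)

include h in
lemma sig_congr : sig c κ₁ = sig c κ₂ := by
  unfold sig
  simp only [Prod.mk.injEq]
  refine ⟨floorSig_congr c h, ?_, τ_congr c h, tie_congr c h⟩
  funext x
  exact decide_eq_decide.mpr (h.2.2.2 x)

end Congr

section Inj

variable {κ₁ κ₂ : C → NNReal}

lemma regionEquiv_of_sig_eq (hsig : sig c κ₁ = sig c κ₂) : RegionEquiv c κ₁ κ₂ := by
  unfold sig at hsig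
  simp only [Prod.mk.injEq] at hsig
  obtain ⟨hfl, hab, hτ, ht⟩ := hsig
  have habx : ∀ x, ((c x : ℝ) < κ₁ x ↔ (c x : ℝ) < κ₂ x) :=
    fun x => decide_eq_decide.mp (congrFun hab x)
  have hadj : ∀ m, (ck c κ₁ m = ck c κ₁ (m + 1) ↔ ck c κ₂ m = ck c κ₂ (m + 1)) := by
    intro m
    by_cases hm : m < Fintype.card C
    · have := congrFun ht ⟨m, hm⟩
      unfold tie at this
      exact decide_eq_decide.mp this
    · push_neg at hm
      exact iff_of_true (ck_stable c κ₁ hm) (ck_stable c κ₂ hm)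
  refine ⟨?_, ?_, ?_, habx⟩
  · intro x h1 h2
    have hx := congrFun hfl x
    unfold floorSig at hx
    rw [dif_pos h1, dif_pos h2] at hx
    have hval : (⌊(κ₁ x : ℝ)⌋).toNat = (⌊(κ₂ x : ℝ)⌋).toNat := congrArg Fin.val hx
    have n1 : (0 : ℤ) ≤ ⌊(κ₁ x : ℝ)⌋ := Int.floor_nonneg.mpr (κ₁ x).coe_nonneg
    have n2 : (0 : ℤ) ≤ ⌊(κ₂ x : ℝ)⌋ := Int.floor_nonneg.mpr (κ₂ x).coe_nonneg
    omega
  · intro x y h1 h2 h3 h4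
    rw [← key_of_below c κ₁ h1, ← key_of_below c κ₁ h2,
      ← key_of_below c κ₂ h3, ← key_of_below c κ₂ h4,
      ← ck_τ c κ₁ x, ← ck_τ c κ₁ y, ← ck_τ c κ₂ x, ← ck_τ c κ₂ y, ← hτ]
    exact mono_transfer_le (ck_mono c κ₁) (ck_mono c κ₂) hadj _ _
  · intro x h1 h2
    have e := mono_transfer_eq (ck_mono c κ₁) (ck_mono c κ₂) hadj
      ((τ c κ₁ x : ℕ) + 1) 0
    rw [ck_zero, ck_zero] at e
    rw [← key_of_below c κ₁ h1, ← key_of_below c κ₂ h2,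
      ← ck_τ c κ₁ x, ← ck_τ c κ₂ x, ← hτ]
    exact e

end Inj

end RegionAux

set_option synthInstance.maxHeartbeats 1000000 in
set_option maxHeartbeats 1000000 in
/-- The number of clock regions (equivalence classes of location-valuation
pairs under region equivalence) is bounded by
`|L| · ∏_{x∈C}(c_x+1) · |C|! · 2^(2|C|)`. -/
theorem region_count_bound {L C : Type*} [Fintype L] [Fintype C] (c : C → ℕ)
    (s : Setoid (L × (C → NNReal)))
    (hs : ∀ p q : L × (C → NNReal),
      s.r p q ↔ (p.1 = q.1 ∧ RegionEquiv c p.2 q.2)) :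
    Finite (Quotient s) ∧
      Nat.card (Quotient s) ≤
        Fintype.card L * (∏ x : C, (c x + 1)) *
          Nat.factorial (Fintype.card C) * 2 ^ (2 * Fintype.card C) := by
  classical
  set n := Fintype.card C with hn
  let T := L × (((x : C) → Fin (c x + 1)) × (C → Bool) × (C ≃ Fin n) × (Fin n → Bool))
  let F : L × (C → NNReal) → T := fun p => (p.1, RegionAux.sig c p.2)
  have hF : ∀ p q : L × (C → NNReal), s.r p q → F p = F q := by
    intro p q hpq
    obtain ⟨h1, h2⟩ := (hs p q).mp hpq
    show (p.1, RegionAux.sig c p.2) = (q.1, RegionAux.sig c q.2)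
    rw [h1, RegionAux.sig_congr c h2]
  let G : Quotient s → T := Quotient.lift F hF
  have hGinj : Function.Injective G := by
    intro a b
    induction a using Quotient.inductionOn with | h p =>
    induction b using Quotient.inductionOn with | h q =>
    intro heq
    have heq' : F p = F q := heq
    have h1 : p.1 = q.1 := congrArg (fun z : T => z.1) heq'
    have h2 : RegionAux.sig c p.2 = RegionAux.sig c q.2 := congrArg (fun z : T => z.2) heq'
    exact Quotient.sound ((hs p q).mpr ⟨h1, RegionAux.regionEquiv_of_sig_eq c h2⟩)
  have hfin : Finite (Quotient s) := Finite.of_injective G hGinj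
  refine ⟨hfin, ?_⟩
  have hle : Nat.card (Quotient s) ≤ Nat.card T := Nat.card_le_card_of_injective G hGinj
  have hcardT : Nat.card T =
      Fintype.card L * ((∏ x : C, (c x + 1)) * (2 ^ n * (Nat.factorial n * 2 ^ n))) := by
    rw [Nat.card_eq_fintype_card]
    simp only [T, Fintype.card_prod, Fintype.card_pi, Fintype.card_fun, Fintype.card_fin,
      Fintype.card_bool, Fintype.card_equiv (Fintype.equivFin C), Finset.prod_const,
      Finset.card_univ, Fintype.card_fin]
    have he : Fintype.card (C ≃ Fin n) = Nat.factorial n := by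
      convert Fintype.card_equiv (Fintype.equivFin C)
    rw [he]
  calc Nat.card (Quotient s) ≤ Nat.card T := hle
    _ = Fintype.card L * (∏ x : C, (c x + 1)) * Nat.factorial n * 2 ^ (2 * n) := by
        rw [hcardT, two_mul, pow_add]; ring
    _ = _ := rfl
end

section
/- Region equivalence is a time-abstract bisimulation with respect to time elapse: if κ₁ ≅ κ₂ and Δ₁ ≥ 0, then there exists Δ₂ ≥ 0 such that κ₁ + Δ₁ ≅ κ₂ + Δ₂, where (κ + Δ)(x) = κ(x) + Δ. -/
lemma floor_fract_shift (v f : ℝ) (n : ℤ) (hf : 0 ≤ f) (hf1 : f < 1) :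
    ⌊v + ((n : ℝ) + f)⌋ = ⌊v⌋ + n + (if 1 ≤ Int.fract v + f then 1 else 0) ∧
    Int.fract (v + ((n : ℝ) + f)) =
      Int.fract v + f - (if 1 ≤ Int.fract v + f then 1 else 0) := by
  have hrw : v + ((n : ℝ) + f) = ((⌊v⌋ + n : ℤ) : ℝ) + (Int.fract v + f) := by
    have : Int.fract v = v - ⌊v⌋ := rfl
    push_cast; linarith
  have h0 : 0 ≤ Int.fract v := Int.fract_nonneg v
  have h1 : Int.fract v < 1 := Int.fract_lt_one v
  have hfl : ⌊Int.fract v + f⌋ = if 1 ≤ Int.fract v + f then 1 else 0 := by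
    split
    · rw [Int.floor_eq_iff]; constructor <;> push_cast <;> linarith
    · rw [Int.floor_eq_iff]; constructor <;> push_cast <;> linarith
  constructor
  · rw [hrw, Int.floor_intCast_add, hfl]
  · rw [hrw, Int.fract_intCast_add]
    have : Int.fract (Int.fract v + f) = (Int.fract v + f) - ⌊Int.fract v + f⌋ := rfl
    rw [this, hfl]; split <;> push_cast <;> ring

lemma le_nat_iff_floor (v : ℝ) (m : ℕ) :
    v ≤ m ↔ (⌊v⌋ < m ∨ (⌊v⌋ = m ∧ Int.fract v = 0)) := by
  have hfr : Int.fract v = v - ⌊v⌋ := rfl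
  have h0 : 0 ≤ Int.fract v := Int.fract_nonneg v
  have h1 : Int.fract v < 1 := Int.fract_lt_one v
  constructor
  · intro hv
    have hle : ⌊v⌋ ≤ (m : ℤ) := by
      have := Int.floor_le_floor hv
      simpa using this
    rcases lt_or_eq_of_le hle with hlt | heq
    · exact Or.inl hlt
    · refine Or.inr ⟨heq, le_antisymm ?_ h0⟩
      have : (⌊v⌋ : ℝ) = (m : ℝ) := by exact_mod_cast heq
      linarith [hfr]
  · rintro (hlt | ⟨heq, hz⟩)
    · have : (⌊v⌋ : ℝ) + 1 ≤ (m : ℝ) := by exact_mod_cast hlt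
      linarith
    · have : (⌊v⌋ : ℝ) = (m : ℝ) := by exact_mod_cast heq
      linarith

/-- Region equivalence is a time-abstract bisimulation with respect to time
elapse: if `κ₁ ≅ κ₂` and `Δ₁ ≥ 0`, then there exists `Δ₂ ≥ 0` with
`κ₁ + Δ₁ ≅ κ₂ + Δ₂`. -/
theorem regionEquiv_time_elapse {C : Type*} [Fintype C] (c : C → ℕ)
    (κ₁ κ₂ : C → NNReal) (h : RegionEquiv c κ₁ κ₂) (Δ₁ : NNReal) :
    ∃ Δ₂ : NNReal,
      RegionEquiv c (fun x => κ₁ x + Δ₁) (fun x => κ₂ x + Δ₂) := by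
  classical
  obtain ⟨hfloor, hord, hzero, hgt⟩ := h
  set f₁ : ℝ := Int.fract (Δ₁ : ℝ) with hf₁def
  have hf₁0 : 0 ≤ f₁ := Int.fract_nonneg _
  have hf₁1 : f₁ < 1 := Int.fract_lt_one _
  have hR : ∀ x, (κ₁ x : ℝ) ≤ c x ↔ (κ₂ x : ℝ) ≤ c x := fun x => by
    rw [← not_lt, ← not_lt, hgt x]
  suffices H : ∃ f₂ : ℝ, 0 ≤ f₂ ∧ f₂ < 1 ∧
      ∀ x, (κ₁ x : ℝ) ≤ c x →
        ((1 ≤ Int.fract (κ₁ x : ℝ) + f₁ ↔ 1 ≤ Int.fract (κ₂ x : ℝ) + f₂) ∧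
         (Int.fract (κ₁ x : ℝ) + f₁ = 0 ↔ Int.fract (κ₂ x : ℝ) + f₂ = 0) ∧
         (Int.fract (κ₁ x : ℝ) + f₁ = 1 ↔ Int.fract (κ₂ x : ℝ) + f₂ = 1)) by
    obtain ⟨f₂, hf₂0, hf₂1, hP⟩ := H
    refine ⟨(⌊(Δ₁ : ℝ)⌋.toNat : NNReal) + ⟨f₂, hf₂0⟩, ?_⟩
    set Δ₂ : NNReal := (⌊(Δ₁ : ℝ)⌋.toNat : NNReal) + ⟨f₂, hf₂0⟩ with hΔ₂def
    have hΔ₂ : (Δ₂ : ℝ) = ((⌊(Δ₁ : ℝ)⌋ : ℤ) : ℝ) + f₂ := by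
      rw [hΔ₂def]
      change (((⌊(Δ₁ : ℝ)⌋.toNat : NNReal) : ℝ) + ((⟨f₂, hf₂0⟩ : NNReal) : ℝ)) = _
      push_cast
      congr 1
      exact_mod_cast Int.toNat_of_nonneg (Int.floor_nonneg.mpr Δ₁.coe_nonneg)
    have hΔ₁ : (Δ₁ : ℝ) = ((⌊(Δ₁ : ℝ)⌋ : ℤ) : ℝ) + f₁ := by
      rw [hf₁def]
      have : Int.fract (Δ₁ : ℝ) = (Δ₁ : ℝ) - ⌊(Δ₁ : ℝ)⌋ := rfl
      linarith
    -- after-elapse formulas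
    have key : ∀ x : C, (κ₁ x : ℝ) ≤ c x →
        (⌊(κ₁ x : ℝ) + (Δ₁ : ℝ)⌋ = ⌊(κ₁ x : ℝ)⌋ + ⌊(Δ₁ : ℝ)⌋ +
            (if 1 ≤ Int.fract (κ₁ x : ℝ) + f₁ then 1 else 0) ∧
         ⌊(κ₂ x : ℝ) + (Δ₂ : ℝ)⌋ = ⌊(κ₂ x : ℝ)⌋ + ⌊(Δ₁ : ℝ)⌋ +
            (if 1 ≤ Int.fract (κ₁ x : ℝ) + f₁ then 1 else 0) ∧
         Int.fract ((κ₁ x : ℝ) + (Δ₁ : ℝ)) = Int.fract (κ₁ x : ℝ) + f₁ -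
            (if 1 ≤ Int.fract (κ₁ x : ℝ) + f₁ then 1 else 0) ∧
         Int.fract ((κ₂ x : ℝ) + (Δ₂ : ℝ)) = Int.fract (κ₂ x : ℝ) + f₂ -
            (if 1 ≤ Int.fract (κ₁ x : ℝ) + f₁ then 1 else 0)) := by
      intro x hx
      obtain ⟨hind, _, _⟩ := hP x hx
      have k1 := floor_fract_shift (κ₁ x : ℝ) f₁ ⌊(Δ₁ : ℝ)⌋ hf₁0 hf₁1
      have k2 := floor_fract_shift (κ₂ x : ℝ) f₂ ⌊(Δ₁ : ℝ)⌋ hf₂0 hf₂1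
      rw [← hΔ₁] at k1
      rw [← hΔ₂] at k2
      have hif : (if 1 ≤ Int.fract (κ₂ x : ℝ) + f₂ then (1:ℤ) else 0) =
          (if 1 ≤ Int.fract (κ₁ x : ℝ) + f₁ then (1:ℤ) else 0) := by
        simp only [hind]
      have hifr : (if 1 ≤ Int.fract (κ₂ x : ℝ) + f₂ then (1:ℝ) else 0) =
          (if 1 ≤ Int.fract (κ₁ x : ℝ) + f₁ then (1:ℝ) else 0) := by
        simp only [hind]
      refine ⟨?_, ?_, ?_, ?_⟩
      · exact k1.1
      · rw [k2.1, hif]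
      · exact k1.2
      · rw [k2.2, hifr]
    have hfloorEq : ∀ x : C, (κ₁ x : ℝ) ≤ c x →
        ⌊(κ₁ x : ℝ) + (Δ₁ : ℝ)⌋ = ⌊(κ₂ x : ℝ) + (Δ₂ : ℝ)⌋ := by
      intro x hx
      obtain ⟨e1, e2, _, _⟩ := key x hx
      rw [e1, e2, hfloor x hx ((hR x).mp hx)]
    have hzeroEq : ∀ x : C, (κ₁ x : ℝ) ≤ c x →
        (Int.fract ((κ₁ x : ℝ) + (Δ₁ : ℝ)) = 0 ↔
          Int.fract ((κ₂ x : ℝ) + (Δ₂ : ℝ)) = 0) := by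
      intro x hx
      obtain ⟨_, _, e3, e4⟩ := key x hx
      obtain ⟨hind, hz0, hz1⟩ := hP x hx
      rw [e3, e4]
      split
      · constructor <;> intro hh
        · have : Int.fract (κ₁ x : ℝ) + f₁ = 1 := by linarith
          have := hz1.mp this; linarith
        · have : Int.fract (κ₂ x : ℝ) + f₂ = 1 := by linarith
          have := hz1.mpr this; linarith
      · constructor <;> intro hh
        · have : Int.fract (κ₁ x : ℝ) + f₁ = 0 := by linarith
          have := hz0.mp this; linarith
        · have : Int.fract (κ₂ x : ℝ) + f₂ = 0 := by linarith
          have := hz0.mpr this; linarith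
    -- bounds propagate backwards
    have hback₁ : ∀ x : C, ((κ₁ x : ℝ) + (Δ₁ : ℝ)) ≤ c x → (κ₁ x : ℝ) ≤ c x := by
      intro x hx; have := Δ₁.coe_nonneg; linarith
    have hback₂ : ∀ x : C, ((κ₂ x : ℝ) + (Δ₂ : ℝ)) ≤ c x → (κ₂ x : ℝ) ≤ c x := by
      intro x hx; have := Δ₂.coe_nonneg; linarith
    refine ⟨?_, ?_, ?_, ?_⟩
    · intro x hx1 hx2
      push_cast at hx1 hx2 ⊢
      exact hfloorEq x (hback₁ x hx1)
    · intro x y hx1 hy1 hx2 hy2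
      push_cast at hx1 hy1 hx2 hy2 ⊢
      have hx1' := hback₁ x hx1
      have hy1' := hback₁ y hy1
      have hx2' := hback₂ x hx2
      have hy2' := hback₂ y hy2
      obtain ⟨_, _, ex3, ex4⟩ := key x hx1'
      obtain ⟨_, _, ey3, ey4⟩ := key y hy1'
      obtain ⟨hindx, _, _⟩ := hP x hx1'
      obtain ⟨hindy, _, _⟩ := hP y hy1'
      have hordxy := hord x y hx1' hy1' ((hR x).mp hx1') ((hR y).mp hy1')
      rw [ex3, ex4, ey3, ey4]
      have b1x : Int.fract (κ₁ x : ℝ) < 1 := Int.fract_lt_one _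
      have b1y : Int.fract (κ₁ y : ℝ) < 1 := Int.fract_lt_one _
      have b2x : Int.fract (κ₂ x : ℝ) < 1 := Int.fract_lt_one _
      have b2y : Int.fract (κ₂ y : ℝ) < 1 := Int.fract_lt_one _
      have b1x' : 0 ≤ Int.fract (κ₁ x : ℝ) := Int.fract_nonneg _
      have b1y' : 0 ≤ Int.fract (κ₁ y : ℝ) := Int.fract_nonneg _
      have b2x' : 0 ≤ Int.fract (κ₂ x : ℝ) := Int.fract_nonneg _
      have b2y' : 0 ≤ Int.fract (κ₂ y : ℝ) := Int.fract_nonneg _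
      by_cases hcx : 1 ≤ Int.fract (κ₁ x : ℝ) + f₁ <;>
        by_cases hcy : 1 ≤ Int.fract (κ₁ y : ℝ) + f₁
      · rw [if_pos hcx, if_pos hcy]
        constructor <;> intro hh
        · have : Int.fract (κ₁ x : ℝ) ≤ Int.fract (κ₁ y : ℝ) := by linarith
          have := hordxy.mp this; linarith
        · have : Int.fract (κ₂ x : ℝ) ≤ Int.fract (κ₂ y : ℝ) := by linarith
          have := hordxy.mpr this; linarith
      · -- x crossed, y not: both sides false
        rw [if_pos hcx, if_neg hcy]
        have hcy2 : ¬ 1 ≤ Int.fract (κ₂ y : ℝ) + f₂ := by rw [← hindy]; exact hcy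
        have hcx2 : 1 ≤ Int.fract (κ₂ x : ℝ) + f₂ := hindx.mp hcx
        constructor <;> intro _ <;> linarith
      · -- x not, y crossed: both sides false? No: x not crossed has larger fract value
        rw [if_neg hcx, if_pos hcy]
        have hcy2 : 1 ≤ Int.fract (κ₂ y : ℝ) + f₂ := hindy.mp hcy
        have hcx2 : ¬ 1 ≤ Int.fract (κ₂ x : ℝ) + f₂ := by rw [← hindx]; exact hcx
        constructor <;> intro hh <;> [skip; skip] <;> linarith
      · rw [if_neg hcx, if_neg hcy]
        constructor <;> intro hh
        · have : Int.fract (κ₁ x : ℝ) ≤ Int.fract (κ₁ y : ℝ) := by linarith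
          have := hordxy.mp this; linarith
        · have : Int.fract (κ₂ x : ℝ) ≤ Int.fract (κ₂ y : ℝ) := by linarith
          have := hordxy.mpr this; linarith
    · intro x hx1 hx2
      push_cast at hx1 hx2 ⊢
      exact hzeroEq x (hback₁ x hx1)
    · intro x
      push_cast
      by_cases hx : (κ₁ x : ℝ) ≤ c x
      · have hx2 := (hR x).mp hx
        rw [← not_le, ← not_le, not_iff_not]
        rw [le_nat_iff_floor, le_nat_iff_floor, hfloorEq x hx, hzeroEq x hx]
      · have hx2 : ¬ (κ₂ x : ℝ) ≤ c x := fun hh => hx ((hR x).mpr hh)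
        push_neg at hx hx2
        have := Δ₁.coe_nonneg; have := Δ₂.coe_nonneg
        constructor <;> intro _ <;> linarith
  -- now construct f₂
  by_cases hA : f₁ = 0
  · refine ⟨0, le_refl _, one_pos, fun x hx => ?_⟩
    have hx2 := (hR x).mp hx
    have b1 : Int.fract (κ₁ x : ℝ) < 1 := Int.fract_lt_one _
    have b2 : Int.fract (κ₂ x : ℝ) < 1 := Int.fract_lt_one _
    have b1' : 0 ≤ Int.fract (κ₁ x : ℝ) := Int.fract_nonneg _
    have b2' : 0 ≤ Int.fract (κ₂ x : ℝ) := Int.fract_nonneg _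
    rw [hA]
    refine ⟨?_, ?_, ?_⟩
    · constructor <;> intro hh <;> linarith
    · simpa using hzero x hx hx2
    · constructor <;> intro hh <;> linarith
  · by_cases hB : ∃ x₀, (κ₁ x₀ : ℝ) ≤ c x₀ ∧ Int.fract (κ₁ x₀ : ℝ) + f₁ = 1
    · obtain ⟨x₀, hx₀, hhit⟩ := hB
      have hx₀2 := (hR x₀).mp hx₀
      have hfr₀pos : 0 < Int.fract (κ₁ x₀ : ℝ) := by
        rcases lt_or_eq_of_le (Int.fract_nonneg (κ₁ x₀ : ℝ)) with hlt | heq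
        · exact hlt
        · exfalso; rw [← heq] at hhit; linarith
      have hfr₀2pos : 0 < Int.fract (κ₂ x₀ : ℝ) := by
        rcases lt_or_eq_of_le (Int.fract_nonneg (κ₂ x₀ : ℝ)) with hlt | heq
        · exact hlt
        · exfalso
          have := (hzero x₀ hx₀ hx₀2).mpr heq.symm
          linarith
      refine ⟨1 - Int.fract (κ₂ x₀ : ℝ), by linarith [Int.fract_lt_one (κ₂ x₀ : ℝ)],
        by linarith, fun x hx => ?_⟩
      have hx2 := (hR x).mp hx
      have hordx := hord x₀ x hx₀ hx hx₀2 hx2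
      have hordx' := hord x x₀ hx hx₀ hx2 hx₀2
      have hf₁pos : 0 < f₁ := lt_of_le_of_ne hf₁0 (Ne.symm hA)
      have b1' : 0 ≤ Int.fract (κ₁ x : ℝ) := Int.fract_nonneg _
      have b2' : 0 ≤ Int.fract (κ₂ x : ℝ) := Int.fract_nonneg _
      have hlt2 : Int.fract (κ₂ x₀ : ℝ) < 1 := Int.fract_lt_one _
      have hlt1 : Int.fract (κ₁ x₀ : ℝ) < 1 := Int.fract_lt_one _
      refine ⟨?_, ?_, ?_⟩
      · constructor <;> intro hh
        · have : Int.fract (κ₁ x₀ : ℝ) ≤ Int.fract (κ₁ x : ℝ) := by linarith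
          have := hordx.mp this; linarith
        · have : Int.fract (κ₂ x₀ : ℝ) ≤ Int.fract (κ₂ x : ℝ) := by linarith
          have := hordx.mpr this; linarith
      · constructor <;> intro hh <;> [linarith; linarith]
      · constructor <;> intro hh
        · have h1 : Int.fract (κ₁ x₀ : ℝ) ≤ Int.fract (κ₁ x : ℝ) := by linarith
          have h2 : Int.fract (κ₁ x : ℝ) ≤ Int.fract (κ₁ x₀ : ℝ) := by linarith
          have := hordx.mp h1
          have := hordx'.mp h2
          linarith
        · have h1 : Int.fract (κ₂ x₀ : ℝ) ≤ Int.fract (κ₂ x : ℝ) := by linarith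
          have h2 : Int.fract (κ₂ x : ℝ) ≤ Int.fract (κ₂ x₀ : ℝ) := by linarith
          have := hordx.mpr h1
          have := hordx'.mpr h2
          linarith
    · -- generic case: strict crossing, pick midpoint
      push_neg at hB
      have hf₁pos : 0 < f₁ := lt_of_le_of_ne hf₁0 (Ne.symm hA)
      set K : Finset C := Finset.univ.filter
        (fun x => (κ₁ x : ℝ) ≤ c x ∧ 1 ≤ Int.fract (κ₁ x : ℝ) + f₁) with hKdef
      set L : Finset C := Finset.univ.filter
        (fun x => (κ₁ x : ℝ) ≤ c x ∧ ¬ 1 ≤ Int.fract (κ₁ x : ℝ) + f₁) with hLdef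
      set SA : Finset ℝ := insert (0:ℝ) (K.image fun x => 1 - Int.fract (κ₂ x : ℝ))
        with hSAdef
      set SB : Finset ℝ := insert (1:ℝ) (L.image fun x => 1 - Int.fract (κ₂ x : ℝ))
        with hSBdef
      have hSA : SA.Nonempty := ⟨0, Finset.mem_insert_self _ _⟩
      have hSB : SB.Nonempty := ⟨1, Finset.mem_insert_self _ _⟩
      set A : ℝ := SA.max' hSA with hAdef
      set B : ℝ := SB.min' hSB with hBdef
      -- membership facts
      have hKfr2 : ∀ x ∈ K, 0 < Int.fract (κ₂ x : ℝ) := by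
        intro x hxK
        rw [hKdef, Finset.mem_filter] at hxK
        obtain ⟨-, hx, hcr⟩ := hxK
        have hfr1 : 0 < Int.fract (κ₁ x : ℝ) := by linarith
        rcases lt_or_eq_of_le (Int.fract_nonneg (κ₂ x : ℝ)) with hlt | heq
        · exact hlt
        · exfalso
          have := (hzero x hx ((hR x).mp hx)).mpr heq.symm
          linarith
      have hKL : ∀ x ∈ K, ∀ y ∈ L, Int.fract (κ₂ y : ℝ) < Int.fract (κ₂ x : ℝ) := by
        intro x hxK y hyL
        rw [hKdef, Finset.mem_filter] at hxK
        rw [hLdef, Finset.mem_filter] at hyL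
        obtain ⟨-, hx, hcrx⟩ := hxK
        obtain ⟨-, hy, hcry⟩ := hyL
        have hstrict : 1 < Int.fract (κ₁ x : ℝ) + f₁ :=
          lt_of_le_of_ne hcrx (fun hh => hB x hx hh.symm)
        by_contra hcon
        push_neg at hcon
        have := (hord x y hx hy ((hR x).mp hx) ((hR y).mp hy)).mpr hcon
        push_neg at hcry
        linarith
      have hAB : A < B := by
        rw [hAdef, hBdef, Finset.max'_lt_iff]
        intro a haSA
        rw [Finset.lt_min'_iff]
        intro b hbSB
        rw [hSAdef, Finset.mem_insert] at haSA
        rw [hSBdef, Finset.mem_insert] at hbSB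
        rcases haSA with rfl | haim
        · rcases hbSB with rfl | hbim
          · norm_num
          · obtain ⟨y, hyL, rfl⟩ := Finset.mem_image.mp hbim
            have := Int.fract_lt_one (κ₂ y : ℝ)
            linarith
        · obtain ⟨x, hxK, rfl⟩ := Finset.mem_image.mp haim
          have hx2 := hKfr2 x hxK
          rcases hbSB with rfl | hbim
          · linarith
          · obtain ⟨y, hyL, rfl⟩ := Finset.mem_image.mp hbim
            have := hKL x hxK y hyL
            linarith
      have hA0 : 0 ≤ A := Finset.le_max' _ _ (Finset.mem_insert_self _ _)
      have hB1 : B ≤ 1 := Finset.min'_le _ _ (Finset.mem_insert_self _ _)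
      refine ⟨(A + B) / 2, by linarith, by linarith, fun x hx => ?_⟩
      have hx2 := (hR x).mp hx
      have b1' : 0 ≤ Int.fract (κ₁ x : ℝ) := Int.fract_nonneg _
      have b2' : 0 ≤ Int.fract (κ₂ x : ℝ) := Int.fract_nonneg _
      have hnm : Int.fract (κ₁ x : ℝ) + f₁ ≠ 1 := fun hh => (hB x hx hh)
      by_cases hcr : 1 ≤ Int.fract (κ₁ x : ℝ) + f₁
      · have hxK : x ∈ K := by
          rw [hKdef, Finset.mem_filter]; exact ⟨Finset.mem_univ x, hx, hcr⟩
        have hmem : 1 - Int.fract (κ₂ x : ℝ) ∈ SA := by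
          rw [hSAdef, Finset.mem_insert]
          exact Or.inr (Finset.mem_image.mpr ⟨x, hxK, rfl⟩)
        have hle : 1 - Int.fract (κ₂ x : ℝ) ≤ A := Finset.le_max' _ _ hmem
        have hs2 : 1 < Int.fract (κ₂ x : ℝ) + (A + B) / 2 := by linarith
        have hstrict : 1 < Int.fract (κ₁ x : ℝ) + f₁ := lt_of_le_of_ne hcr (Ne.symm hnm)
        refine ⟨⟨fun _ => le_of_lt hs2, fun _ => hcr⟩, ?_, ?_⟩
        · constructor <;> intro hh <;> linarith
        · constructor <;> intro hh <;> linarith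
      · have hxL : x ∈ L := by
          rw [hLdef, Finset.mem_filter]; exact ⟨Finset.mem_univ x, hx, hcr⟩
        have hmem : 1 - Int.fract (κ₂ x : ℝ) ∈ SB := by
          rw [hSBdef, Finset.mem_insert]
          exact Or.inr (Finset.mem_image.mpr ⟨x, hxL, rfl⟩)
        have hle : B ≤ 1 - Int.fract (κ₂ x : ℝ) := Finset.min'_le _ _ hmem
        have hs2 : Int.fract (κ₂ x : ℝ) + (A + B) / 2 < 1 := by linarith
        push_neg at hcr
        refine ⟨⟨fun hh => absurd hh (not_le.mpr hcr), fun hh => absurd hh (not_le.mpr hs2)⟩, ?_, ?_⟩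
        · constructor <;> intro hh <;> linarith
        · constructor <;> intro hh <;> linarith
end

section
/- Region equivalence is preserved by clock resets: if κ₁ ≅ κ₂ and λ ⊆ C, then κ₁[λ:=0] ≅ κ₂[λ:=0], where κ[λ:=0] sets all clocks in λ to 0 and leaves the others unchanged. -/
/-- Region equivalence is preserved by clock resets. -/
theorem regionEquiv_reset {C : Type*} [Fintype C] (c : C → ℕ)
    (lam : Set C) [DecidablePred (· ∈ lam)]
    (κ₁ κ₂ : C → NNReal) (h : RegionEquiv c κ₁ κ₂) :
    RegionEquiv c (fun x => if x ∈ lam then 0 else κ₁ x)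
      (fun x => if x ∈ lam then 0 else κ₂ x) := by
  obtain ⟨h1, h2, h3, h4⟩ := h
  refine ⟨?_, ?_, ?_, ?_⟩
  · intro x hx hx'
    by_cases hm : x ∈ lam
    · simp [hm]
    · simp only [hm, if_neg, not_false_iff] at hx hx' ⊢
      exact h1 x hx hx'
  · intro x y hx hy hx' hy'
    by_cases hmx : x ∈ lam
    · by_cases hmy : y ∈ lam
      · simp [hmx, hmy]
      · simp [hmx, hmy, Int.fract_nonneg]
    · by_cases hmy : y ∈ lam
      · simp only [hmx, hmy, if_pos, if_neg, not_false_iff, NNReal.coe_zero,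
          Int.fract_zero] at hx hx' ⊢
        constructor
        · intro h
          exact ((h3 x hx hx').mp (le_antisymm h (Int.fract_nonneg _))).le
        · intro h
          exact ((h3 x hx hx').mpr (le_antisymm h (Int.fract_nonneg _))).le
      · simp only [hmx, hmy, if_neg, not_false_iff] at hx hy hx' hy' ⊢
        exact h2 x y hx hy hx' hy'
  · intro x hx hx'
    by_cases hm : x ∈ lam
    · simp [hm]
    · simp only [hm, if_neg, not_false_iff] at hx hx' ⊢
      exact h3 x hx hx'
  · intro x
    by_cases hm : x ∈ lam
    · simp [hm]
    · simp only [hm, if_neg, not_false_iff]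
      exact h4 x
end

section
/- If two region-equivalent clock valuations both satisfy the constraints of a region, then they satisfy the same clock constraints: for every clock constraint θ generated by the grammar θ ::= x ≤ d | d ≤ x | ¬θ | θ₁ ∧ θ₂ with d ≤ c_x for all atoms involving clock x, κ₁ ⊨ θ iff κ₂ ⊨ θ whenever κ₁ ≅ κ₂. -/
/-- Clock constraints: `θ ::= x ≤ d | d ≤ x | ¬θ | θ₁ ∧ θ₂`. -/
inductive ClockConstraint (C : Type*) : Type _
  | le : C → ℕ → ClockConstraint C
  | ge : C → ℕ → ClockConstraint C
  | not : ClockConstraint C → ClockConstraint C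
  | and : ClockConstraint C → ClockConstraint C → ClockConstraint C

/-- Satisfaction of clock constraints. -/
def ClockConstraint.Sat {C : Type*} (κ : C → NNReal) :
    ClockConstraint C → Prop
  | .le x d => (κ x : ℝ) ≤ d
  | .ge x d => (d : ℝ) ≤ (κ x : ℝ)
  | .not θ => ¬ θ.Sat κ
  | .and θ₁ θ₂ => θ₁.Sat κ ∧ θ₂.Sat κ

/-- All constants in the constraint respect the maximal constants `c`. -/
def ClockConstraint.BoundedBy {C : Type*} (c : C → ℕ) :
    ClockConstraint C → Prop
  | .le x d => d ≤ c x
  | .ge x d => d ≤ c x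
  | .not θ => θ.BoundedBy c
  | .and θ₁ θ₂ => θ₁.BoundedBy c ∧ θ₂.BoundedBy c

private lemma le_int_iff (r : ℝ) (d : ℤ) :
    r ≤ d ↔ ⌊r⌋ < d ∨ (⌊r⌋ = d ∧ Int.fract r = 0) := by
  constructor
  · intro hr
    have hfl : ⌊r⌋ ≤ d := by
      have := Int.floor_le_floor hr
      simpa using this
    rcases lt_or_eq_of_le hfl with h | h
    · exact Or.inl h
    · refine Or.inr ⟨h, le_antisymm ?_ (Int.fract_nonneg r)⟩
      have := Int.floor_le r
      unfold Int.fract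
      rw [h]; linarith
  · rintro (h | ⟨h, hf⟩)
    · have h1 : r < ⌊r⌋ + 1 := Int.lt_floor_add_one r
      have : (⌊r⌋ : ℝ) + 1 ≤ d := by exact_mod_cast h
      linarith
    · have : r = ⌊r⌋ + Int.fract r := (Int.floor_add_fract r).symm
      rw [this, hf, h]; simp

/-- Region-equivalent valuations satisfy the same clock constraints whose
constants are bounded by the maximal constants. -/
theorem regionEquiv_sat_iff {C : Type*} [Fintype C] (c : C → ℕ)
    (κ₁ κ₂ : C → NNReal) (h : RegionEquiv c κ₁ κ₂)
    (θ : ClockConstraint C) (hθ : θ.BoundedBy c) :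
    θ.Sat κ₁ ↔ θ.Sat κ₂ := by
  obtain ⟨hfl, _, hz, hgt⟩ := h
  induction θ with
  | le x d =>
    simp only [ClockConstraint.BoundedBy] at hθ
    simp only [ClockConstraint.Sat]
    by_cases hx : (c x : ℝ) < κ₁ x
    · have hx2 : (c x : ℝ) < κ₂ x := (hgt x).mp hx
      have hd : (d : ℝ) ≤ c x := by exact_mod_cast hθ
      constructor <;> intro hle <;> linarith
    · push_neg at hx
      have hx2 : (κ₂ x : ℝ) ≤ c x := by
        by_contra h2; push_neg at h2
        exact absurd ((hgt x).mpr h2) (not_lt.mpr hx)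
      have e1 := hfl x hx hx2
      have e2 := hz x hx hx2
      rw [show ((d:ℕ):ℝ) = ((d:ℤ):ℝ) by push_cast; ring,
        le_int_iff, le_int_iff, e1, e2]
  | ge x d =>
    simp only [ClockConstraint.BoundedBy] at hθ
    simp only [ClockConstraint.Sat]
    by_cases hx : (c x : ℝ) < κ₁ x
    · have hx2 : (c x : ℝ) < κ₂ x := (hgt x).mp hx
      have hd : (d : ℝ) ≤ c x := by exact_mod_cast hθ
      constructor <;> intro hle <;> linarith
    · push_neg at hx
      have hx2 : (κ₂ x : ℝ) ≤ c x := by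
        by_contra h2; push_neg at h2
        exact absurd ((hgt x).mpr h2) (not_lt.mpr hx)
      have e1 := hfl x hx hx2
      have h1 : ((d:ℤ) : ℝ) ≤ (κ₁ x : ℝ) ↔ (d:ℤ) ≤ ⌊(κ₁ x : ℝ)⌋ :=
        (Int.le_floor).symm
      have h2 : ((d:ℤ) : ℝ) ≤ (κ₂ x : ℝ) ↔ (d:ℤ) ≤ ⌊(κ₂ x : ℝ)⌋ :=
        (Int.le_floor).symm
      rw [show ((d:ℕ):ℝ) = ((d:ℤ):ℝ) by push_cast; ring, h1, h2, e1]
  | not θ ih =>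
    simp only [ClockConstraint.BoundedBy] at hθ
    simp only [ClockConstraint.Sat]
    exact not_congr (ih hθ)
  | and θ₁ θ₂ ih₁ ih₂ =>
    simp only [ClockConstraint.Sat]
    exact and_congr (ih₁ hθ.1) (ih₂ hθ.2)
end

section
/- For every infinite sequence of states carrying boolean predicates (xₖ = 0) and (V*ₖ = true) for a fixed clock x, the following two LTL-style conditions are equivalent, given the monotonicity assumption that once V* becomes true it stays true unless the clock is reset to 0: (Condition A) [infinitely often (x = 0)] OR [eventually always V* = true]; (Condition B) infinitely often [(x = 0) OR (V* = true)]. -/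
/-- Streett elimination for a single clock: given the dynamics
`∀ k, P k → (P (k+1) ∨ Z (k+1))`, the condition
`□◇Z ∨ ◇□P` is equivalent to `□◇(Z ∨ P)`. -/
theorem streett_elim_single
    (Z P : ℕ → Prop) (hdyn : ∀ k, P k → (P (k + 1) ∨ Z (k + 1))) :
    ((∀ N, ∃ k ≥ N, Z k) ∨ (∃ N, ∀ k ≥ N, P k)) ↔
      (∀ N, ∃ k ≥ N, (Z k ∨ P k)) := by
  constructor
  · rintro (h | ⟨N, hN⟩) M
    · obtain ⟨k, hk, hz⟩ := h M; exact ⟨k, hk, Or.inl hz⟩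
    · exact ⟨max N M, le_max_right _ _, Or.inr (hN _ (le_max_left _ _))⟩
  · intro hB
    by_cases hZ : ∀ N, ∃ k ≥ N, Z k
    · exact Or.inl hZ
    · push_neg at hZ
      obtain ⟨N, hN⟩ := hZ
      obtain ⟨k, hk, hzp⟩ := hB N
      have hp : P k := hzp.resolve_left (hN k hk)
      refine Or.inr ⟨k, fun m hm => ?_⟩
      induction m with
      | zero => simpa [Nat.le_zero.mp hm] using hp
      | succ n ih =>
        rcases Nat.lt_or_ge k (n+1) with h | h
        · have hpn : P n := ih (Nat.lt_succ_iff.mp h)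
          exact (hdyn n hpn).resolve_right (hN (n+1) (le_trans hk (Nat.le_of_lt h)))
        · have : k = n+1 := le_antisymm hm h
          simpa [← this] using hp
end

section
/- If in an infinite run a particular clock y is reset to zero infinitely often, and infinitely often the clock y reaches a value of at least 1/2 after having been reset since its previous such occurrence, then the total elapsed time diverges. -/
open Filter

/-- If a clock is reset infinitely often and reaches value at least `1/2`
infinitely often, then total elapsed time diverges. -/
theorem reset_and_half_infinitely_often_time_diverges
    (t v : ℕ → ℝ) (hmono : Monotone t) (ht0 : t 0 = 0)
    (hdyn : ∀ k, v (k + 1) = v k + (t (k + 1) - t k) ∨ v (k + 1) = 0)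
    (hreset : {k : ℕ | v k = 0}.Infinite)
    (hhalf : {k : ℕ | (1 : ℝ) / 2 ≤ v k}.Infinite) :
    Tendsto t atTop atTop := by
  have key : ∀ r m, r ≤ m → v r = 0 → v m ≤ t m - t r := by
    intro r m hrm hvr
    induction m, hrm using Nat.le_induction with
    | base => simp [hvr]
    | succ m hm ih =>
      rcases hdyn m with h | h
      · rw [h]; linarith [ih]
      · rw [h]
        have := hmono (Nat.le_succ m)
        have := hmono hm
        linarith
  have aux : ∀ j : ℕ, ∃ n, (j : ℝ) / 2 ≤ t n := by
    intro j
    induction j with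
    | zero => exact ⟨0, by simp [ht0]⟩
    | succ j ih =>
      obtain ⟨n, hn⟩ := ih
      obtain ⟨r, hr, hnr⟩ := hreset.exists_gt n
      obtain ⟨m, hm, hrm⟩ := hhalf.exists_gt r
      have h1 : v m ≤ t m - t r := key r m hrm.le hr
      have h2 := hmono hnr.le
      refine ⟨m, ?_⟩
      push_cast
      have := hm
      simp only [Set.mem_setOf_eq] at this
      linarith
  exact tendsto_atTop_atTop_of_monotone hmono (fun b => let ⟨j, hj⟩ := exists_nat_gt (2 * b);
    let ⟨n, hn⟩ := aux j; ⟨n, by linarith⟩)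
end

section
/- Zielonka-tree memory bound for a disjunction of co-Büchi conditions with a conjunction of Büchi conditions: for the Muller condition φ₁ = (◇□F₁) ∨ (◇□F₂) ∨ ⋀_{i≤n}(□◇I_i) over a finite turn-based game, if player 1 has a sure winning strategy from a state s, then player 1 has a pure sure winning strategy from s using at most n memory states. -/
/-- A turn-based game graph: `turn1 s` holds when it is player 1's turn at
state `s`; `succ s` is the (nonempty) set of successors of `s`. -/
structure TBGame (S : Type*) where
  turn1 : S → Prop
  succ : S → Set S
  succ_nonempty : ∀ s, (succ s).Nonempty

variable {S : Type}

/-- A (pure, history-dependent) player-1 strategy maps the history of past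
states and the current state to a chosen successor. -/
def ValidStrategy (G : TBGame S) (σ : List S → S → S) : Prop :=
  ∀ h s, σ h s ∈ G.succ s

/-- A play of the game: every step moves along an edge. -/
def IsPlay (G : TBGame S) (p : ℕ → S) : Prop :=
  ∀ k, p (k + 1) ∈ G.succ (p k)

/-- A play is consistent with a player-1 strategy `σ`. -/
def Consistent (G : TBGame S) (σ : List S → S → S) (p : ℕ → S) : Prop :=
  ∀ k, G.turn1 (p k) →
    p (k + 1) = σ (List.ofFn fun i : Fin k => p i) (p k)

/-- `σ` is a sure winning strategy for player 1 from `s` for objective `Φ`. -/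
def SureWin (G : TBGame S) (σ : List S → S → S) (s : S)
    (Φ : (ℕ → S) → Prop) : Prop :=
  ValidStrategy G σ ∧
    ∀ p : ℕ → S, p 0 = s → IsPlay G p → Consistent G σ p → Φ p

/-- `σ` is a finite-memory strategy with at most `m` memory states. -/
def FinMemStrategy (σ : List S → S → S) (m : ℕ) : Prop :=
  ∃ M : Type, Finite M ∧ Nat.card M ≤ m ∧
    ∃ (m0 : M) (upd : M → S → M) (nxt : M → S → S),
      σ = fun h s => nxt (h.foldl upd m0) s

/-- `□◇T`: states in `T` are visited infinitely often. -/
def InfOften (p : ℕ → S) (T : Set S) : Prop := ∀ N, ∃ k ≥ N, p k ∈ T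

/-- `◇□T`: eventually the play stays in `T` forever. -/
def EvAlways (p : ℕ → S) (T : Set S) : Prop := ∃ N, ∀ k ≥ N, p k ∈ T

/- ===================== auxiliary development ===================== -/

namespace MB
open Classical

variable {Q : Type}

noncomputable def anySucc (H : TBGame Q) (u : Q) : Q := (H.succ_nonempty u).choose

lemma anySucc_mem (H : TBGame Q) (u : Q) : anySucc H u ∈ H.succ u :=
  (H.succ_nonempty u).choose_spec

/-- controllable predecessor for player 1 -/
def cpre1 (H : TBGame Q) (X : Set Q) : Set Q :=
  {u | (H.turn1 u → ∃ v ∈ H.succ u, v ∈ X) ∧ (¬ H.turn1 u → ∀ v ∈ H.succ u, v ∈ X)}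

/-- controllable predecessor for player 2 -/
def cpre2 (H : TBGame Q) (X : Set Q) : Set Q :=
  {u | (H.turn1 u → ∀ v ∈ H.succ u, v ∈ X) ∧ (¬ H.turn1 u → ∃ v ∈ H.succ u, v ∈ X)}

lemma cpre1_mono (H : TBGame Q) {X Y : Set Q} (h : X ⊆ Y) : cpre1 H X ⊆ cpre1 H Y := by
  intro u hu
  exact ⟨fun t => by obtain ⟨v, hv1, hv2⟩ := hu.1 t; exact ⟨v, hv1, h hv2⟩,
    fun t v hv => h (hu.2 t v hv)⟩

lemma cpre2_mono (H : TBGame Q) {X Y : Set Q} (h : X ⊆ Y) : cpre2 H X ⊆ cpre2 H Y := by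
  intro u hu
  exact ⟨fun t v hv => h (hu.1 t v hv),
    fun t => by obtain ⟨v, hv1, hv2⟩ := hu.2 t; exact ⟨v, hv1, h hv2⟩⟩

/-- player-1 attractor, by stages -/
def att1 (H : TBGame Q) (T : Set Q) : ℕ → Set Q
  | 0 => ∅
  | k+1 => T ∪ cpre1 H (att1 H T k)

def Att1 (H : TBGame Q) (T : Set Q) : Set Q := ⋃ k, att1 H T k

/-- player-2 attractor, by stages -/
def att2 (H : TBGame Q) (T : Set Q) : ℕ → Set Q
  | 0 => ∅
  | k+1 => T ∪ cpre2 H (att2 H T k)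

def Att2 (H : TBGame Q) (T : Set Q) : Set Q := ⋃ k, att2 H T k

lemma att1_mono_step (H : TBGame Q) (T : Set Q) (k : ℕ) : att1 H T k ⊆ att1 H T (k+1) := by
  induction k with
  | zero => simp [att1]
  | succ k ih => exact Set.union_subset_union_right _ (cpre1_mono H ih)

lemma att1_mono (H : TBGame Q) (T : Set Q) {k l : ℕ} (h : k ≤ l) : att1 H T k ⊆ att1 H T l := by
  induction l with
  | zero => simp_all
  | succ l ih =>
    rcases Nat.lt_or_ge k (l+1) with h' | h'
    · exact (ih (Nat.lt_succ_iff.mp h')).trans (att1_mono_step H T l)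
    · have : k = l + 1 := le_antisymm h h'
      subst this; rfl

lemma att2_mono_step (H : TBGame Q) (T : Set Q) (k : ℕ) : att2 H T k ⊆ att2 H T (k+1) := by
  induction k with
  | zero => simp [att2]
  | succ k ih => exact Set.union_subset_union_right _ (cpre2_mono H ih)

lemma att2_mono (H : TBGame Q) (T : Set Q) {k l : ℕ} (h : k ≤ l) : att2 H T k ⊆ att2 H T l := by
  induction l with
  | zero => simp_all
  | succ l ih =>
    rcases Nat.lt_or_ge k (l+1) with h' | h'
    · exact (ih (Nat.lt_succ_iff.mp h')).trans (att2_mono_step H T l)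
    · have : k = l + 1 := le_antisymm h h'
      subst this; rfl

lemma subset_Att1 (H : TBGame Q) (T : Set Q) : T ⊆ Att1 H T :=
  fun u hu => Set.mem_iUnion.mpr ⟨1, Or.inl hu⟩

lemma subset_Att2 (H : TBGame Q) (T : Set Q) : T ⊆ Att2 H T :=
  fun u hu => Set.mem_iUnion.mpr ⟨1, Or.inl hu⟩

/-- a finite set inside an increasing union lies in one stage -/
lemma finite_subset_chain {C : ℕ → Set Q} (mono : ∀ {k l : ℕ}, k ≤ l → C k ⊆ C l)
    {s : Set Q} (hs : s.Finite) (h : s ⊆ ⋃ k, C k) : ∃ K, s ⊆ C K := by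
  haveI := hs.fintype
  have hex : ∀ x : s, ∃ k, x.1 ∈ C k := fun x => Set.mem_iUnion.mp (h x.2)
  choose g hg using hex
  refine ⟨Finset.univ.sup g, fun x hx => ?_⟩
  exact mono (Finset.le_sup (Finset.mem_univ (⟨x, hx⟩ : s))) (hg ⟨x, hx⟩)

lemma Att1_closed [Finite Q] (H : TBGame Q) (T : Set Q) :
    cpre1 H (Att1 H T) ⊆ Att1 H T := by
  intro u hu
  by_cases ht : H.turn1 u
  · obtain ⟨v, hv1, hv2⟩ := hu.1 ht
    obtain ⟨k, hk⟩ := Set.mem_iUnion.mp hv2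
    refine Set.mem_iUnion.mpr ⟨k+1, Or.inr ⟨fun _ => ⟨v, hv1, hk⟩, fun h' => absurd ht h'⟩⟩
  · have hsub : H.succ u ⊆ Att1 H T := fun v hv => hu.2 ht v hv
    obtain ⟨K, hK⟩ := finite_subset_chain (fun h => att1_mono H T h) (Set.toFinite _) hsub
    exact Set.mem_iUnion.mpr ⟨K+1, Or.inr ⟨fun h' => absurd h' ht, fun _ v hv => hK hv⟩⟩

lemma Att2_closed [Finite Q] (H : TBGame Q) (T : Set Q) :
    cpre2 H (Att2 H T) ⊆ Att2 H T := by
  intro u hu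
  by_cases ht : H.turn1 u
  · have hsub : H.succ u ⊆ Att2 H T := fun v hv => hu.1 ht v hv
    obtain ⟨K, hK⟩ := finite_subset_chain (fun h => att2_mono H T h) (Set.toFinite _) hsub
    exact Set.mem_iUnion.mpr ⟨K+1, Or.inr ⟨fun _ v hv => hK hv, fun h' => absurd ht h'⟩⟩
  · obtain ⟨v, hv1, hv2⟩ := hu.2 ht
    obtain ⟨k, hk⟩ := Set.mem_iUnion.mp hv2
    exact Set.mem_iUnion.mpr ⟨k+1, Or.inr ⟨fun h' => absurd h' ht, fun _ => ⟨v, hv1, hk⟩⟩⟩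

/-- safety stages for player 1 (stay in A forever) -/
def saf (H : TBGame Q) (A : Set Q) : ℕ → Set Q
  | 0 => A
  | k+1 => A ∩ cpre1 H (saf H A k)

def Saf (H : TBGame Q) (A : Set Q) : Set Q := ⋂ k, saf H A k

lemma saf_anti_step (H : TBGame Q) (A : Set Q) (k : ℕ) : saf H A (k+1) ⊆ saf H A k := by
  induction k with
  | zero => exact Set.inter_subset_left
  | succ k ih => exact Set.inter_subset_inter_right _ (cpre1_mono H ih)

lemma saf_anti (H : TBGame Q) (A : Set Q) {k l : ℕ} (h : k ≤ l) : saf H A l ⊆ saf H A k := by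
  induction l with
  | zero => simp_all
  | succ l ih =>
    rcases Nat.lt_or_ge k (l+1) with h' | h'
    · exact (saf_anti_step H A l).trans (ih (Nat.lt_succ_iff.mp h'))
    · have : k = l + 1 := le_antisymm h h'
      subst this; rfl

lemma Saf_subset (H : TBGame Q) (A : Set Q) : Saf H A ⊆ A :=
  fun u hu => Set.mem_iInter.mp hu 0

/-- a decreasing chain hit inside a finite set has a common element -/
lemma exists_mem_all_of_decreasing {D : ℕ → Set Q} (anti : ∀ {k l : ℕ}, k ≤ l → D l ⊆ D k)
    {s : Set Q} (hs : s.Finite) (hne : ∀ k, ∃ v ∈ s, v ∈ D k) : ∃ v ∈ s, ∀ k, v ∈ D k := by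
  by_contra hc
  push_neg at hc
  haveI := hs.fintype
  have hex : ∀ x : s, ∃ k, x.1 ∉ D k := fun x => hc x.1 x.2
  choose g hg using hex
  set K := Finset.univ.sup g with hK
  obtain ⟨v, hv, hvD⟩ := hne K
  exact hg ⟨v, hv⟩ (anti (Finset.le_sup (Finset.mem_univ (⟨v, hv⟩ : s))) hvD)

lemma Saf_closed [Finite Q] (H : TBGame Q) (A : Set Q) :
    Saf H A ⊆ cpre1 H (Saf H A) := by
  intro u hu
  by_cases ht : H.turn1 u
  · have hne : ∀ k, ∃ v ∈ H.succ u, v ∈ saf H A k := by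
      intro k
      have := Set.mem_iInter.mp hu (k+1)
      exact this.2.1 ht
    obtain ⟨v, hv1, hv2⟩ := exists_mem_all_of_decreasing (fun h => saf_anti H A h)
      (Set.toFinite _) hne
    exact ⟨fun _ => ⟨v, hv1, Set.mem_iInter.mpr hv2⟩, fun h' => absurd ht h'⟩
  · refine ⟨fun h' => absurd h' ht, fun _ v hv => Set.mem_iInter.mpr fun k => ?_⟩
    have := Set.mem_iInter.mp hu (k+1)
    exact this.2.2 ht v hv

/- ---------- histories, paths, gluing ---------- -/

/-- history of the first `k` states of a play -/
def hist (p : ℕ → Q) (k : ℕ) : List Q := List.ofFn (fun i : Fin k => p i)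

lemma hist_zero (p : ℕ → Q) : hist p 0 = [] := rfl

lemma hist_succ (p : ℕ → Q) (k : ℕ) : hist p (k+1) = hist p k ++ [p k] := by
  unfold hist
  rw [List.ofFn_succ']
  simp [List.concat_eq_append]

lemma hist_eq_of_agree {p q : ℕ → Q} {k : ℕ} (h : ∀ i < k, p i = q i) :
    hist p k = hist q k := by
  unfold hist
  congr 1
  funext i
  exact h i i.2

/-- consistency with a strategy, relative to a past history `h` -/
def ConsFrom (H : TBGame Q) (σ : List Q → Q → Q) (h : List Q) (p : ℕ → Q) : Prop :=
  ∀ k, H.turn1 (p k) → p (k+1) = σ (h ++ hist p k) (p k)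

lemma consistent_iff_consFrom {H : TBGame Q} {σ : List Q → Q → Q} {p : ℕ → Q} :
    Consistent H σ p ↔ ConsFrom H σ [] p := by
  simp [Consistent, ConsFrom, hist]

/-- finite σ-consistent path relative to history `h` -/
structure PathOn (H : TBGame Q) (σ : List Q → Q → Q) (h : List Q) (q : ℕ → Q) (m : ℕ) : Prop where
  step : ∀ k < m, q (k+1) ∈ H.succ (q k)
  cons : ∀ k < m, H.turn1 (q k) → q (k+1) = σ (h ++ hist q k) (q k)

lemma PathOn.zero (H : TBGame Q) (σ : List Q → Q → Q) (h : List Q) (q : ℕ → Q) :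
    PathOn H σ h q 0 := ⟨fun k hk => absurd hk (Nat.not_lt_zero k), fun k hk => absurd hk (Nat.not_lt_zero k)⟩

/-- prepend one state in front of a path -/
def pcons (u : Q) (q : ℕ → Q) : ℕ → Q := fun k => match k with
  | 0 => u
  | k+1 => q k

@[simp] lemma pcons_zero (u : Q) (q : ℕ → Q) : pcons u q 0 = u := rfl
@[simp] lemma pcons_succ (u : Q) (q : ℕ → Q) (k : ℕ) : pcons u q (k+1) = q k := rfl

lemma hist_pcons (u : Q) (q : ℕ → Q) (k : ℕ) :
    hist (pcons u q) (k+1) = [u] ++ hist q k := by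
  induction k with
  | zero => simp [hist_succ, hist_zero]
  | succ k ih =>
    rw [hist_succ, ih, hist_succ, pcons_succ, List.append_assoc]

lemma PathOn.prepend {H : TBGame Q} {σ : List Q → Q → Q} {h : List Q} {q : ℕ → Q} {m : ℕ}
    {u : Q} (hstep : q 0 ∈ H.succ u) (hcons : H.turn1 u → q 0 = σ h u)
    (hp : PathOn H σ (h ++ [u]) q m) : PathOn H σ h (pcons u q) (m+1) := by
  constructor
  · intro k hk
    cases k with
    | zero => simpa using hstep
    | succ k =>
      simp only [pcons_succ]
      exact hp.step k (Nat.lt_of_succ_lt_succ hk)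
  · intro k hk ht
    cases k with
    | zero => simpa [hist_zero] using hcons ht
    | succ k =>
      simp only [pcons_succ] at ht ⊢
      rw [hist_pcons, ← List.append_assoc]
      exact hp.cons k (Nat.lt_of_succ_lt_succ hk) ht

/-- glue a finite path (of length m) with a continuation -/
def pglue (q : ℕ → Q) (m : ℕ) (p : ℕ → Q) : ℕ → Q := fun k => if k < m then q k else p (k - m)

lemma pglue_lt {q : ℕ → Q} {m : ℕ} {p : ℕ → Q} {k : ℕ} (h : k < m) : pglue q m p k = q k :=
  if_pos h

lemma pglue_ge {q : ℕ → Q} {m : ℕ} {p : ℕ → Q} {k : ℕ} (h : m ≤ k) : pglue q m p k = p (k - m) :=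
  if_neg (Nat.not_lt.mpr h)

lemma pglue_eq_q {q : ℕ → Q} {m : ℕ} {p : ℕ → Q} (hp0 : p 0 = q m) {k : ℕ} (h : k ≤ m) :
    pglue q m p k = q k := by
  rcases Nat.lt_or_ge k m with h' | h'
  · exact pglue_lt h'
  · have : k = m := le_antisymm h h'
    subst this
    rw [pglue_ge le_rfl, Nat.sub_self, hp0]

lemma hist_pglue_le {q : ℕ → Q} {m : ℕ} {p : ℕ → Q} (hp0 : p 0 = q m) {k : ℕ} (h : k ≤ m) :
    hist (pglue q m p) k = hist q k :=
  hist_eq_of_agree (fun i hi => pglue_eq_q hp0 (le_of_lt (lt_of_lt_of_le hi h)))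

lemma hist_pglue_add {q : ℕ → Q} {m : ℕ} {p : ℕ → Q} (hp0 : p 0 = q m) (j : ℕ) :
    hist (pglue q m p) (m + j) = hist q m ++ hist p j := by
  induction j with
  | zero => simp [hist_pglue_le hp0 le_rfl, hist_zero]
  | succ j ih =>
    have : m + (j+1) = (m + j) + 1 := rfl
    rw [this, hist_succ, ih, hist_succ, pglue_ge (Nat.le_add_right m j), Nat.add_sub_cancel_left,
      List.append_assoc]

lemma glue_play {H : TBGame Q} {σ : List Q → Q → Q} {h : List Q} {q : ℕ → Q} {m : ℕ} {p : ℕ → Q}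
    (hq : PathOn H σ h q m) (hp0 : p 0 = q m) (hpl : IsPlay H p)
    (hpc : ConsFrom H σ (h ++ hist q m) p) :
    IsPlay H (pglue q m p) ∧ ConsFrom H σ h (pglue q m p) := by
  constructor
  · intro k
    rcases Nat.lt_or_ge k m with hk | hk
    · rw [pglue_lt hk, pglue_eq_q hp0 (Nat.succ_le_of_lt hk)]
      exact hq.step k hk
    · rw [pglue_ge hk, pglue_ge (le_trans hk (Nat.le_succ k)),
        Nat.succ_sub hk]
      exact hpl (k - m)
  · intro k ht
    rcases Nat.lt_or_ge k m with hk | hk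
    · rw [pglue_eq_q hp0 (le_of_lt hk)] at ht ⊢
      rw [pglue_eq_q hp0 (Nat.succ_le_of_lt hk), hist_pglue_le hp0 (le_of_lt hk)]
      exact hq.cons k hk ht
    · obtain ⟨j, rfl⟩ := Nat.exists_eq_add_of_le hk
      rw [pglue_ge hk, Nat.add_sub_cancel_left] at ht ⊢
      have h1 : m + j + 1 = m + (j + 1) := rfl
      rw [h1, pglue_ge (Nat.le_add_right m (j+1)), Nat.add_sub_cancel_left,
        hist_pglue_add hp0 j, ← List.append_assoc]
      exact hpc j ht

/- ---------- shift lemmas for the objectives ---------- -/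

lemma evAlways_shift {p : ℕ → Q} {X : Set Q} (t : ℕ) :
    EvAlways (fun k => p (k + t)) X ↔ EvAlways p X := by
  constructor
  · rintro ⟨N, hN⟩
    refine ⟨N + t, fun k hk => ?_⟩
    have := hN (k - t) (by omega)
    simpa [Nat.sub_add_cancel (by omega : t ≤ k)] using this
  · rintro ⟨N, hN⟩
    exact ⟨N, fun k hk => hN (k + t) (by omega)⟩

lemma infOften_shift {p : ℕ → Q} {X : Set Q} (t : ℕ) :
    InfOften (fun k => p (k + t)) X ↔ InfOften p X := by
  constructor
  · intro h N
    obtain ⟨k, hk1, hk2⟩ := h N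
    exact ⟨k + t, by omega, hk2⟩
  · intro h N
    obtain ⟨k, hk1, hk2⟩ := h (N + t)
    exact ⟨k - t, by omega, by simpa [Nat.sub_add_cancel (by omega : t ≤ k)] using hk2⟩

/-- the objective: `◇□A ∨ ◇□B ∨ □◇J` -/
def Obj (A B J : Set Q) (p : ℕ → Q) : Prop :=
  EvAlways p A ∨ EvAlways p B ∨ InfOften p J

lemma obj_shift {A B J : Set Q} {p : ℕ → Q} (t : ℕ) :
    Obj A B J (fun k => p (k + t)) ↔ Obj A B J p := by
  unfold Obj
  rw [evAlways_shift, evAlways_shift, infOften_shift]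

/- ---------- restricted game ---------- -/

noncomputable def restrict (H : TBGame Q) (U : Set Q) : TBGame Q where
  turn1 := H.turn1
  succ u := if (H.succ u ∩ U).Nonempty then H.succ u ∩ U else H.succ u
  succ_nonempty u := by
    by_cases h : (H.succ u ∩ U).Nonempty
    · simpa [h] using h
    · simpa [h] using H.succ_nonempty u

lemma restrict_turn1 (H : TBGame Q) (U : Set Q) (u : Q) :
    (restrict H U).turn1 u = H.turn1 u := rfl

lemma restrict_succ_eq {H : TBGame Q} {U : Set Q} {u : Q} (h : (H.succ u ∩ U).Nonempty) :
    (restrict H U).succ u = H.succ u ∩ U := by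
  simp [restrict, h]

lemma restrict_succ_subset (H : TBGame Q) (U : Set Q) (u : Q) :
    (restrict H U).succ u ⊆ H.succ u := by
  by_cases h : (H.succ u ∩ U).Nonempty
  · rw [restrict_succ_eq h]; exact Set.inter_subset_left
  · simp [restrict, h]

lemma glue_path {H : TBGame Q} {σ : List Q → Q → Q} {h : List Q} {q : ℕ → Q} {m : ℕ}
    {p : ℕ → Q} {l : ℕ} (hq : PathOn H σ h q m) (hp0 : p 0 = q m)
    (hp : PathOn H σ (h ++ hist q m) p l) : PathOn H σ h (pglue q m p) (m + l) := by
  constructor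
  · intro k hk
    rcases Nat.lt_or_ge k m with hk' | hk'
    · rw [pglue_lt hk', pglue_eq_q hp0 (Nat.succ_le_of_lt hk')]
      exact hq.step k hk'
    · rw [pglue_ge hk', pglue_ge (le_trans hk' (Nat.le_succ k)), Nat.succ_sub hk']
      exact hp.step (k - m) (by omega)
  · intro k hk ht
    rcases Nat.lt_or_ge k m with hk' | hk'
    · rw [pglue_eq_q hp0 (le_of_lt hk')] at ht ⊢
      rw [pglue_eq_q hp0 (Nat.succ_le_of_lt hk'), hist_pglue_le hp0 (le_of_lt hk')]
      exact hq.cons k hk' ht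
    · obtain ⟨j, rfl⟩ := Nat.exists_eq_add_of_le hk'
      rw [pglue_ge hk', Nat.add_sub_cancel_left] at ht ⊢
      have h1 : m + j + 1 = m + (j + 1) := rfl
      rw [h1, pglue_ge (Nat.le_add_right m (j+1)), Nat.add_sub_cancel_left,
        hist_pglue_add hp0 j, ← List.append_assoc]
      exact hp.cons j (by omega) ht

/-- glue infinitely many σ-consistent segments, each making progress and
exiting `A` and `B`, into an infinite play -/
lemma segments_to_play {H : TBGame Q} {σ : List Q → Q → Q} {X A B : Set Q}
    (SEG : ∀ (h : List Q) (u : Q), u ∈ X → ∃ (m : ℕ) (q : ℕ → Q), 0 < m ∧ q 0 = u ∧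
      PathOn H σ h q m ∧ (∀ k ≤ m, q k ∈ X) ∧ (∃ k ≤ m, q k ∉ A) ∧ (∃ k ≤ m, q k ∉ B))
    (h₀ : List Q) (u₀ : Q) (hu₀ : u₀ ∈ X) :
    ∃ p : ℕ → Q, p 0 = u₀ ∧ IsPlay H p ∧ ConsFrom H σ h₀ p ∧ (∀ k, p k ∈ X) ∧
      (∀ N, ∃ k ≥ N, p k ∉ A) ∧ (∀ N, ∃ k ≥ N, p k ∉ B) := by
  classical
  set G : ((ℕ → Q) × ℕ) → Prop :=
    fun c => c.1 0 = u₀ ∧ (∀ k ≤ c.2, c.1 k ∈ X) ∧ PathOn H σ h₀ c.1 c.2 with hG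
  have EXT : ∀ c : (ℕ → Q) × ℕ, ∃ c' : (ℕ → Q) × ℕ, G c →
      (G c' ∧ c.2 < c'.2 ∧ (∀ k ≤ c.2, c'.1 k = c.1 k) ∧
       (∃ k, c.2 ≤ k ∧ k ≤ c'.2 ∧ c'.1 k ∉ A) ∧ (∃ k, c.2 ≤ k ∧ k ≤ c'.2 ∧ c'.1 k ∉ B)) := by
    intro c
    by_cases hc : G c
    · obtain ⟨m, q, hm, hq0, hpath, hmem, ⟨kA, hkA, hA⟩, ⟨kB, hkB, hB⟩⟩ :=
        SEG (h₀ ++ hist c.1 c.2) (c.1 c.2) (hc.2.1 c.2 le_rfl)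
      have hq0' : q 0 = c.1 c.2 := hq0
      refine ⟨(pglue c.1 c.2 q, c.2 + m), fun _ => ⟨⟨?_, ?_, ?_⟩, by dsimp only; omega, ?_, ?_, ?_⟩⟩
      · dsimp only
        rw [pglue_eq_q hq0' (Nat.zero_le _)]; exact hc.1
      · dsimp only
        intro k hk
        rcases le_or_gt k c.2 with hk' | hk'
        · rw [pglue_eq_q hq0' hk']; exact hc.2.1 k hk'
        · rw [pglue_ge (le_of_lt hk')]
          exact hmem (k - c.2) (by omega)
      · exact glue_path hc.2.2 hq0' hpath
      · dsimp only
        intro k hk; exact pglue_eq_q hq0' hk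
      · dsimp only
        refine ⟨c.2 + kA, by omega, by omega, ?_⟩
        rw [pglue_ge (Nat.le_add_right _ _), Nat.add_sub_cancel_left]; exact hA
      · dsimp only
        refine ⟨c.2 + kB, by omega, by omega, ?_⟩
        rw [pglue_ge (Nat.le_add_right _ _), Nat.add_sub_cancel_left]; exact hB
    · exact ⟨c, fun h => absurd h hc⟩
  choose ext hext using EXT
  set F : ℕ → (ℕ → Q) × ℕ := fun i => ext^[i] (fun _ => u₀, 0) with hF
  have F_succ : ∀ i, F (i+1) = ext (F i) := fun i => Function.iterate_succ_apply' ext i _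
  have F0 : F 0 = (fun _ => u₀, 0) := rfl
  have good0 : G (F 0) := by
    rw [F0]
    refine ⟨rfl, fun k hk => ?_, PathOn.zero H σ h₀ _⟩
    have : k = 0 := Nat.le_zero.mp hk
    subst this
    exact hu₀
  have goodF : ∀ i, G (F i) := by
    intro i
    induction i with
    | zero => exact good0
    | succ i ih => rw [F_succ]; exact (hext (F i) ih).1
  have stepF : ∀ i, (F i).2 < (F (i+1)).2 ∧ (∀ k ≤ (F i).2, (F (i+1)).1 k = (F i).1 k) ∧
      (∃ k, (F i).2 ≤ k ∧ k ≤ (F (i+1)).2 ∧ (F (i+1)).1 k ∉ A) ∧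
      (∃ k, (F i).2 ≤ k ∧ k ≤ (F (i+1)).2 ∧ (F (i+1)).1 k ∉ B) := by
    intro i
    have := hext (F i) (goodF i)
    rw [← F_succ] at this
    exact ⟨this.2.1, this.2.2.1, this.2.2.2.1, this.2.2.2.2⟩
  have Tmono : ∀ {i j : ℕ}, i ≤ j → (F i).2 ≤ (F j).2 := by
    intro i j hij
    induction j with
    | zero => simp_all
    | succ j ih =>
      rcases Nat.lt_or_ge i (j+1) with h' | h'
      · exact le_trans (ih (Nat.lt_succ_iff.mp h')) (le_of_lt (stepF j).1)
      · have : i = j + 1 := le_antisymm hij h'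
        subst this; rfl
  have Tge : ∀ i, i ≤ (F i).2 := by
    intro i
    induction i with
    | zero => exact Nat.zero_le _
    | succ i ih => exact Nat.lt_of_le_of_lt ih (stepF i).1
  have stab : ∀ {i j : ℕ}, i ≤ j → ∀ k ≤ (F i).2, (F j).1 k = (F i).1 k := by
    intro i j hij
    induction j with
    | zero =>
      have : i = 0 := Nat.le_zero.mp hij
      subst this; intro k _; rfl
    | succ j ih =>
      rcases Nat.lt_or_ge i (j+1) with h' | h'
      · intro k hk
        have hij' := Nat.lt_succ_iff.mp h'
        rw [(stepF j).2.1 k (le_trans hk (Tmono hij'))]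
        exact ih hij' k hk
      · have : i = j + 1 := le_antisymm hij h'
        subst this; intro k _; rfl
  refine ⟨fun k => (F (k+1)).1 k, ?_, ?_, ?_, ?_, ?_, ?_⟩
  · exact (goodF 1).1
  · intro k
    have h1 : (F (k+2)).1 k = (F (k+1)).1 k :=
      stab (Nat.le_succ (k+1)) k (le_trans (Nat.le_succ k) (Tge (k+1)))
    have h2 := (goodF (k+2)).2.2.step k (Nat.lt_of_lt_of_le (by omega) (Tge (k+2)))
    rw [h1] at h2
    exact h2
  · intro k ht
    have h1 : (F (k+2)).1 k = (F (k+1)).1 k :=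
      stab (Nat.le_succ (k+1)) k (le_trans (Nat.le_succ k) (Tge (k+1)))
    have hh : hist (fun k => (F (k+1)).1 k) k = hist (F (k+2)).1 k := by
      apply hist_eq_of_agree
      intro i hi
      exact (stab (by omega) i (le_trans (Nat.le_succ i) (Tge (i+1)))).symm
    have h2 := (goodF (k+2)).2.2.cons k (Nat.lt_of_lt_of_le (by omega) (Tge (k+2)))
    rw [h1] at h2
    rw [hh]
    exact h2 ht
  · intro k
    exact (goodF (k+1)).2.1 k (le_trans (Nat.le_succ k) (Tge (k+1)))
  · intro N
    obtain ⟨k, hk1, hk2, hk3⟩ := (stepF N).2.2.1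
    refine ⟨k, le_trans (Tge N) hk1, ?_⟩
    show (F (k+1)).1 k ∉ A
    rcases le_or_gt (k+1) (N+1) with h' | h'
    · rw [← stab h' k (le_trans (Nat.le_succ k) (Tge (k+1)))]; exact hk3
    · rw [stab (by omega : N+1 ≤ k+1) k hk2]; exact hk3
  · intro N
    obtain ⟨k, hk1, hk2, hk3⟩ := (stepF N).2.2.2
    refine ⟨k, le_trans (Tge N) hk1, ?_⟩
    show (F (k+1)).1 k ∉ B
    rcases le_or_gt (k+1) (N+1) with h' | h'
    · rw [← stab h' k (le_trans (Nat.le_succ k) (Tge (k+1)))]; exact hk3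
    · rw [stab (by omega : N+1 ≤ k+1) k hk2]; exact hk3

/- ---------- ranks and canonical choices ---------- -/

/-- attractor rank -/
noncomputable def rk1 (H : TBGame Q) (T : Set Q) (u : Q) : ℕ := sInf {k | u ∈ att1 H T k}

lemma rk1_spec {H : TBGame Q} {T : Set Q} {u : Q} (hu : u ∈ Att1 H T) :
    u ∈ att1 H T (rk1 H T u) :=
  Nat.sInf_mem (Set.mem_iUnion.mp hu)

lemma rk1_le {H : TBGame Q} {T : Set Q} {u : Q} {k : ℕ} (h : u ∈ att1 H T k) :
    rk1 H T u ≤ k := Nat.sInf_le h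

lemma rk1_pos {H : TBGame Q} {T : Set Q} {u : Q} (hu : u ∈ Att1 H T) : 1 ≤ rk1 H T u := by
  by_contra h
  have h0 : rk1 H T u = 0 := by omega
  have := rk1_spec hu
  rw [h0] at this
  exact this

/-- canonical player-1 move inside the attractor -/
noncomputable def attChoice1 (H : TBGame Q) (T : Set Q) (u : Q) : Q :=
  if h : ∃ v ∈ H.succ u, v ∈ att1 H T (rk1 H T u - 1) then h.choose else anySucc H u

lemma attChoice1_mem_succ (H : TBGame Q) (T : Set Q) (u : Q) :
    attChoice1 H T u ∈ H.succ u := by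
  unfold attChoice1
  split
  · rename_i h
    exact h.choose_spec.1
  · exact anySucc_mem H u

lemma attChoice1_spec {H : TBGame Q} {T : Set Q} {u : Q} (h1 : H.turn1 u)
    (hu : u ∈ Att1 H T) (hT : u ∉ T) :
    attChoice1 H T u ∈ att1 H T (rk1 H T u - 1) := by
  have hmem := rk1_spec hu
  have hr := rk1_pos hu
  obtain ⟨r, hr'⟩ : ∃ r, rk1 H T u = r + 1 := ⟨rk1 H T u - 1, by omega⟩
  rw [hr'] at hmem
  have hcp : u ∈ cpre1 H (att1 H T r) := hmem.resolve_left hT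
  have hex : ∃ v ∈ H.succ u, v ∈ att1 H T (rk1 H T u - 1) := by
    obtain ⟨v, hv1, hv2⟩ := hcp.1 h1
    exact ⟨v, hv1, by rw [hr']; simpa using hv2⟩
  unfold attChoice1
  rw [dif_pos hex]
  exact hex.choose_spec.2

/-- descent along any play whose player-1 moves obey a step-down property -/
lemma att1_descent {H : TBGame Q} {T : Set Q} {p : ℕ → Q}
    (hstep : ∀ k j, p k ∈ att1 H T (j+1) → p k ∉ T → p (k+1) ∈ att1 H T j) :
    ∀ m t, p t ∈ att1 H T m → ∃ t', t ≤ t' ∧ t' ≤ t + m ∧ p t' ∈ T := by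
  intro m
  induction m with
  | zero => intro t ht; exact absurd ht (by simp [att1])
  | succ m ih =>
    intro t ht
    by_cases hT : p t ∈ T
    · exact ⟨t, le_rfl, by omega, hT⟩
    · obtain ⟨t', ht1, ht2, ht3⟩ := ih (t+1) (hstep t m ht hT)
      exact ⟨t', by omega, by omega, ht3⟩

/-- player 2 can construct a σ-consistent path into the target of its attractor -/
lemma att2_reach {H : TBGame Q} {T : Set Q} {σ : List Q → Q → Q} (hσ : ValidStrategy H σ) :
    ∀ m (h : List Q) (u : Q), u ∈ att2 H T m →
      ∃ l q, q 0 = u ∧ PathOn H σ h q l ∧ q l ∈ T ∧ ∀ k ≤ l, q k ∈ att2 H T m := by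
  intro m
  induction m with
  | zero => intro h u hu; exact absurd hu (by simp [att2])
  | succ m ih =>
    intro h u hu
    rcases hu with hu | hu
    · refine ⟨0, fun _ => u, rfl, PathOn.zero H σ h _, hu, ?_⟩
      intro k hk
      exact Or.inl hu
    · by_cases ht : H.turn1 u
      · have hv : σ h u ∈ att2 H T m := hu.1 ht (σ h u) (hσ h u)
        obtain ⟨l, q, hq0, hpath, hqT, hqmem⟩ := ih (h ++ [u]) (σ h u) hv
        refine ⟨l + 1, pcons u q, rfl, ?_, hqT, ?_⟩
        · exact PathOn.prepend (hq0 ▸ hσ h u) (fun _ => hq0) hpath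
        · intro k hk
          cases k with
          | zero => exact Or.inr hu
          | succ k => exact att2_mono_step H T m (hqmem k (by omega))
      · obtain ⟨v, hv1, hv2⟩ := hu.2 ht
        obtain ⟨l, q, hq0, hpath, hqT, hqmem⟩ := ih (h ++ [u]) v hv2
        refine ⟨l + 1, pcons u q, rfl, ?_, hqT, ?_⟩
        · exact PathOn.prepend (hq0 ▸ hv1) (fun h' => absurd h' ht) hpath
        · intro k hk
          cases k with
          | zero => exact Or.inr hu
          | succ k => exact att2_mono_step H T m (hqmem k (by omega))

/-- if a state is not `r`-safe, player 2 can build a σ-consistent path leaving `A` -/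
lemma saf_exit {H : TBGame Q} {A : Set Q} {σ : List Q → Q → Q} (hσ : ValidStrategy H σ) :
    ∀ r (h : List Q) (u : Q), u ∉ saf H A r →
      ∃ l q, q 0 = u ∧ PathOn H σ h q l ∧ q l ∉ A := by
  intro r
  induction r with
  | zero => intro h u hu; exact ⟨0, fun _ => u, rfl, PathOn.zero H σ h _, hu⟩
  | succ r ih =>
    intro h u hu
    by_cases hA : u ∈ A
    · have hcp : u ∉ cpre1 H (saf H A r) := fun hc => hu ⟨hA, hc⟩
      by_cases ht : H.turn1 u
      · have hall : ∀ v ∈ H.succ u, v ∉ saf H A r := by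
          by_contra hc
          push_neg at hc
          obtain ⟨v, hv1, hv2⟩ := hc
          exact hcp ⟨fun _ => ⟨v, hv1, hv2⟩, fun h' => absurd ht h'⟩
        have hv : σ h u ∉ saf H A r := hall (σ h u) (hσ h u)
        obtain ⟨l, q, hq0, hpath, hqA⟩ := ih (h ++ [u]) (σ h u) hv
        exact ⟨l + 1, pcons u q, rfl,
          PathOn.prepend (hq0 ▸ hσ h u) (fun _ => hq0) hpath, hqA⟩
      · have hex : ∃ v ∈ H.succ u, v ∉ saf H A r := by
          by_contra hc
          push_neg at hc
          exact hcp ⟨fun h' => absurd h' ht, fun _ => hc⟩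
        obtain ⟨v, hv1, hv2⟩ := hex
        obtain ⟨l, q, hq0, hpath, hqA⟩ := ih (h ++ [u]) v hv2
        exact ⟨l + 1, pcons u q, rfl,
          PathOn.prepend (hq0 ▸ hv1) (fun h' => absurd h' ht) hpath, hqA⟩
    · exact ⟨0, fun _ => u, rfl, PathOn.zero H σ h _, hA⟩

/-- canonical safe move -/
noncomputable def safChoice (H : TBGame Q) (A : Set Q) (u : Q) : Q :=
  if h : ∃ v ∈ H.succ u, v ∈ Saf H A then h.choose else anySucc H u

lemma safChoice_mem_succ (H : TBGame Q) (A : Set Q) (u : Q) :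
    safChoice H A u ∈ H.succ u := by
  unfold safChoice
  split
  · rename_i h
    exact h.choose_spec.1
  · exact anySucc_mem H u

lemma safChoice_spec [Finite Q] {H : TBGame Q} {A : Set Q} {u : Q} (h1 : H.turn1 u)
    (hu : u ∈ Saf H A) : safChoice H A u ∈ Saf H A := by
  have hex : ∃ v ∈ H.succ u, v ∈ Saf H A := (Saf_closed H A hu).1 h1
  unfold safChoice
  rw [dif_pos hex]
  exact hex.choose_spec.2

/- ---------- transfer lemmas between restricted and full game ---------- -/

/-- transfer of spoiler statements out of a subgame on a player-1 trap -/
lemma spoiler_transfer {H : TBGame Q} {A B J : Set Q} {UU W : Set Q}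
    (hWU : W ⊆ UU)
    (trap : ∀ u ∈ UU, H.turn1 u → H.succ u ⊆ UU)
    (hC : ∀ σ', ValidStrategy (restrict H UU) σ' → ∀ (h : List Q) (u : Q), u ∈ W →
      ∃ p, p 0 = u ∧ IsPlay (restrict H UU) p ∧ ConsFrom (restrict H UU) σ' h p ∧
        (∀ k, p k ∈ W) ∧ ¬ Obj A B J p) :
    ∀ σ, ValidStrategy H σ → ∀ (h : List Q) (u : Q), u ∈ W →
      ∃ p, p 0 = u ∧ IsPlay H p ∧ ConsFrom H σ h p ∧ (∀ k, p k ∈ W) ∧ ¬ Obj A B J p := by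
  intro σ hσ h u hu
  set H' := restrict H UU with hH'
  set σ' : List Q → Q → Q := fun h' w => if σ h' w ∈ H'.succ w then σ h' w else anySucc H' w
    with hσ'
  have hσ'v : ValidStrategy H' σ' := by
    intro h' w
    by_cases hc : σ h' w ∈ H'.succ w
    · simpa [hσ', hc]
    · simpa [hσ', hc] using anySucc_mem H' w
  obtain ⟨p, hp0, hpl, hpc, hpW, hpObj⟩ := hC σ' hσ'v h u hu
  refine ⟨p, hp0, fun k => restrict_succ_subset H UU (p k) (hpl k), ?_, hpW, hpObj⟩
  intro k ht
  have h1 : σ (h ++ hist p k) (p k) ∈ H'.succ (p k) := by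
    have h2 : H.succ (p k) ⊆ UU := trap (p k) (hWU (hpW k)) ht
    have h3 : (H.succ (p k) ∩ UU).Nonempty := by
      obtain ⟨v, hv⟩ := H.succ_nonempty (p k)
      exact ⟨v, hv, h2 hv⟩
    rw [hH', restrict_succ_eq h3]
    exact ⟨hσ (h ++ hist p k) (p k), h2 (hσ (h ++ hist p k) (p k))⟩
  have := hpc k ht
  rw [this, hσ']
  simp only [if_pos h1]

/-- a path starting inside a closed set stays inside it -/
lemma path_mem_closed {H : TBGame Q} {σ : List Q → Q → Q} {h : List Q} {q : ℕ → Q} {m : ℕ}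
    {U : Set Q} (hclosed : ∀ u ∈ U, H.succ u ⊆ U) (hq : PathOn H σ h q m) (h0 : q 0 ∈ U) :
    ∀ k ≤ m, q k ∈ U := by
  intro k hk
  induction k with
  | zero => exact h0
  | succ k ih =>
    exact hclosed (q k) (ih (by omega)) (hq.step k (by omega))

/-- The master determinacy theorem: every finite closed arena splits into a
positional winning region for player 1 and a spoiling region for player 2. -/
theorem master [Finite Q] (A B J : Set Q) :
    ∀ (N : ℕ) (H : TBGame Q) (U : Set Q), U.ncard ≤ N → (∀ u ∈ U, H.succ u ⊆ U) →
    ∃ (W₁ W₂ : Set Q) (nxt : Q → Q),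
      W₁ ∪ W₂ = U ∧
      (∀ u, nxt u ∈ H.succ u) ∧
      (∀ u ∈ W₁, H.turn1 u → nxt u ∈ W₁) ∧
      (∀ u ∈ W₁, ¬ H.turn1 u → H.succ u ⊆ W₁) ∧
      (∀ u ∈ W₁, ∀ p : ℕ → Q, p 0 = u → IsPlay H p →
        (∀ k, H.turn1 (p k) → p (k+1) = nxt (p k)) → Obj A B J p) ∧
      (∀ σ, ValidStrategy H σ → ∀ (h : List Q) (u : Q), u ∈ W₂ →
        ∃ p, p 0 = u ∧ IsPlay H p ∧ ConsFrom H σ h p ∧ (∀ k, p k ∈ W₂) ∧ ¬ Obj A B J p) := by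
  intro N
  induction N with
  | zero =>
    intro H U hcard hclosed
    have hU : U = ∅ := (Set.ncard_eq_zero (Set.toFinite U)).mp (Nat.le_zero.mp hcard)
    subst hU
    exact ⟨∅, ∅, anySucc H, by simp, anySucc_mem H, by simp, by simp, by simp, by simp⟩
  | succ N ih =>
    intro H U hcard hclosed
    by_cases hJU : (J ∩ U).Nonempty
    · -- CASE 1 : some J-states present
      set R : Set Q := U ∩ Att1 H (J ∩ U) with hR
      set U' : Set Q := U \ R with hU'
      have fR1 : J ∩ U ⊆ R := fun x hx => ⟨hx.2, subset_Att1 H _ hx⟩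
      have fU'lt : U'.ncard < U.ncard := by
        apply Set.ncard_lt_ncard _ (Set.toFinite U)
        constructor
        · exact Set.diff_subset
        · intro hsub
          obtain ⟨x, hx⟩ := hJU
          exact (hsub (fR1 hx).1).2 (fR1 hx)
      have fU'p1 : ∀ u ∈ U', H.turn1 u → H.succ u ⊆ U' := by
        intro u hu ht v hv
        refine ⟨hclosed u hu.1 hv, fun hvR => hu.2 ?_⟩
        obtain ⟨k, hk⟩ := Set.mem_iUnion.mp hvR.2
        exact ⟨hu.1, Set.mem_iUnion.mpr ⟨k+1, Or.inr ⟨fun _ => ⟨v, hv, hk⟩, fun h' => absurd ht h'⟩⟩⟩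
      have fU'ne : ∀ u ∈ U', (H.succ u ∩ U').Nonempty := by
        intro u hu
        by_cases ht : H.turn1 u
        · obtain ⟨v, hv⟩ := H.succ_nonempty u
          exact ⟨v, hv, fU'p1 u hu ht hv⟩
        · by_contra hc
          rw [Set.not_nonempty_iff_eq_empty] at hc
          have hsub : H.succ u ⊆ Att1 H (J ∩ U) := by
            intro v hv
            have hvU : v ∈ U := hclosed u hu.1 hv
            have : v ∉ U' := fun hv' => (Set.eq_empty_iff_forall_notMem.mp hc v) ⟨hv, hv'⟩
            have hvR : v ∈ R := by
              by_contra hvR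
              exact this ⟨hvU, hvR⟩
            exact hvR.2
          obtain ⟨K, hK⟩ := finite_subset_chain (fun hkl => att1_mono H _ hkl) (Set.toFinite _) hsub
          exact hu.2 ⟨hu.1, Set.mem_iUnion.mpr ⟨K+1,
            Or.inr ⟨fun h' => absurd h' ht, fun _ v hv => hK hv⟩⟩⟩
      have frestr : ∀ u ∈ U', (restrict H U').succ u = H.succ u ∩ U' :=
        fun u hu => restrict_succ_eq (fU'ne u hu)
      have fU'closed : ∀ u ∈ U', (restrict H U').succ u ⊆ U' := by
        intro u hu
        rw [frestr u hu]
        exact Set.inter_subset_right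
      obtain ⟨W₁', W₂', nxt', hunion', hvalid', hp1stay', hp2stay', hS', hC'⟩ :=
        ih (restrict H U') U' (by omega) fU'closed
      by_cases hW2' : W₂' = ∅
      · -- player 1 wins everywhere on U
        have hW₁'U' : W₁' = U' := by rw [← hunion', hW2', Set.union_empty]
        set nxt : Q → Q := fun u =>
          if u ∈ U' then nxt' u
          else if u ∈ R ∧ u ∉ J then attChoice1 H (J ∩ U) u
          else anySucc H u with hnxt
        have hvalid : ∀ u, nxt u ∈ H.succ u := by
          intro u
          simp only [hnxt]
          split_ifs
          · exact restrict_succ_subset H U' u (hvalid' u)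
          · exact attChoice1_mem_succ H _ u
          · exact anySucc_mem H u
        refine ⟨U, ∅, nxt, by simp, hvalid, ?_, ?_, ?_, by simp⟩
        · intro u hu _
          exact hclosed u hu (hvalid u)
        · intro u hu _
          exact hclosed u hu
        · -- soundness
          intro u hu p hp0 hpl hpcons
          have hstay : ∀ k, p k ∈ U := by
            intro k
            induction k with
            | zero => rw [hp0]; exact hu
            | succ k ihk => exact hclosed (p k) ihk (hpl k)
          by_cases hc : ∃ Nt, ∀ k ≥ Nt, p k ∈ U'
          · obtain ⟨Nt, hNt⟩ := hc
            have hqU' : ∀ k, p (k + Nt) ∈ U' := fun k => hNt (k + Nt) (by omega)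
            have hqplay : IsPlay (restrict H U') (fun k => p (k + Nt)) := by
              intro k
              show p (k + 1 + Nt) ∈ (restrict H U').succ (p (k + Nt))
              have heq : k + 1 + Nt = (k + Nt) + 1 := by omega
              rw [heq, frestr _ (hqU' k)]
              refine ⟨hpl (k + Nt), ?_⟩
              have := hqU' (k+1)
              rwa [heq] at this
            have hqcons : ∀ k, (restrict H U').turn1 (p (k + Nt)) →
                p (k + 1 + Nt) = nxt' (p (k + Nt)) := by
              intro k ht
              have heq : k + 1 + Nt = (k + Nt) + 1 := by omega
              rw [heq, hpcons _ ht]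
              simp only [hnxt]
              rw [if_pos (hqU' k)]
            have hobj := hS' (p (0 + Nt)) (hW₁'U' ▸ hqU' 0) (fun k => p (k + Nt)) rfl
              hqplay hqcons
            exact (obj_shift Nt).mp hobj
          · push_neg at hc
            refine Or.inr (Or.inr ?_)
            intro Nt
            obtain ⟨k, hk1, hk2⟩ := hc Nt
            have hkR : p k ∈ R := by
              by_contra hr
              exact hk2 ⟨hstay k, hr⟩
            have hstep : ∀ k' j, p k' ∈ att1 H (J ∩ U) (j+1) → p k' ∉ J ∩ U →
                p (k'+1) ∈ att1 H (J ∩ U) j := by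
              intro k' j hk' hT
              by_cases ht : H.turn1 (p k')
              · have hpkR : p k' ∈ R := ⟨hstay k', Set.mem_iUnion.mpr ⟨j+1, hk'⟩⟩
                have hpknJ : p k' ∉ J := fun hj => hT ⟨hj, hstay k'⟩
                have hpknU' : p k' ∉ U' := fun h' => h'.2 hpkR
                rw [hpcons _ ht]
                simp only [hnxt]
                rw [if_neg hpknU', if_pos (⟨hpkR, hpknJ⟩ : p k' ∈ R ∧ p k' ∉ J)]
                have hch := attChoice1_spec ht hpkR.2 hT
                have hle : rk1 H (J ∩ U) (p k') - 1 ≤ j := by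
                  have := rk1_le hk'
                  omega
                exact att1_mono H _ hle hch
              · exact (hk'.resolve_left hT).2 ht (p (k'+1)) (hpl k')
            obtain ⟨m, hm⟩ := Set.mem_iUnion.mp hkR.2
            obtain ⟨t', ht'1, _, ht'3⟩ := att1_descent hstep m k hm
            exact ⟨t', by omega, ht'3.1⟩
      · -- remove the player-2 attractor of W₂' and recurse
        set D : Set Q := U ∩ Att2 H W₂' with hD
        set U₂ : Set Q := U \ D with hU₂
        have hW₂'U' : W₂' ⊆ U' := hunion' ▸ Set.subset_union_right
        have hW₂'D : W₂' ⊆ D := fun x hx => ⟨(hW₂'U' hx).1, subset_Att2 H _ hx⟩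
        have fU₂lt : U₂.ncard < U.ncard := by
          apply Set.ncard_lt_ncard _ (Set.toFinite U)
          constructor
          · exact Set.diff_subset
          · intro hsub
            obtain ⟨x, hx⟩ := Set.nonempty_iff_ne_empty.mpr hW2'
            exact (hsub (hW₂'D hx).1).2 (hW₂'D hx)
        have fU₂p2 : ∀ u ∈ U₂, ¬ H.turn1 u → H.succ u ⊆ U₂ := by
          intro u hu ht v hv
          refine ⟨hclosed u hu.1 hv, fun hvD => hu.2 ?_⟩
          obtain ⟨k, hk⟩ := Set.mem_iUnion.mp hvD.2
          exact ⟨hu.1, Set.mem_iUnion.mpr ⟨k+1,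
            Or.inr ⟨fun h' => absurd h' ht, fun _ => ⟨v, hv, hk⟩⟩⟩⟩
        have fU₂ne : ∀ u ∈ U₂, (H.succ u ∩ U₂).Nonempty := by
          intro u hu
          by_cases ht : H.turn1 u
          · by_contra hc
            rw [Set.not_nonempty_iff_eq_empty] at hc
            have hsub : H.succ u ⊆ Att2 H W₂' := by
              intro v hv
              have hvU : v ∈ U := hclosed u hu.1 hv
              have hv' : v ∉ U₂ := fun hv' => (Set.eq_empty_iff_forall_notMem.mp hc v) ⟨hv, hv'⟩
              have hvD : v ∈ D := by
                by_contra hvD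
                exact hv' ⟨hvU, hvD⟩
              exact hvD.2
            obtain ⟨K, hK⟩ := finite_subset_chain (fun hkl => att2_mono H _ hkl)
              (Set.toFinite _) hsub
            exact hu.2 ⟨hu.1, Set.mem_iUnion.mpr ⟨K+1,
              Or.inr ⟨fun _ v hv => hK hv, fun h' => absurd ht h'⟩⟩⟩
          · obtain ⟨v, hv⟩ := H.succ_nonempty u
            exact ⟨v, hv, fU₂p2 u hu ht hv⟩
        have frestr₂ : ∀ u ∈ U₂, (restrict H U₂).succ u = H.succ u ∩ U₂ :=
          fun u hu => restrict_succ_eq (fU₂ne u hu)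
        have fU₂closed : ∀ u ∈ U₂, (restrict H U₂).succ u ⊆ U₂ := by
          intro u hu
          rw [frestr₂ u hu]
          exact Set.inter_subset_right
        obtain ⟨W₁₂, W₂₂, nxt₂, hunion₂, hvalid₂, hp1stay₂, hp2stay₂, hS₂, hC₂⟩ :=
          ih (restrict H U₂) U₂ (by omega) fU₂closed
        have hW₁₂U₂ : W₁₂ ⊆ U₂ := hunion₂ ▸ Set.subset_union_left
        have hW₂₂U₂ : W₂₂ ⊆ U₂ := hunion₂ ▸ Set.subset_union_right
        set nxt : Q → Q := fun u => if u ∈ U₂ then nxt₂ u else anySucc H u with hnxt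
        have hvalid : ∀ u, nxt u ∈ H.succ u := by
          intro u
          simp only [hnxt]
          split_ifs
          · exact restrict_succ_subset H U₂ u (hvalid₂ u)
          · exact anySucc_mem H u
        have hp1S : ∀ u ∈ W₁₂, H.turn1 u → nxt u ∈ W₁₂ := by
          intro u hu ht
          simp only [hnxt]
          rw [if_pos (hW₁₂U₂ hu)]
          exact hp1stay₂ u hu ht
        have hp2S : ∀ u ∈ W₁₂, ¬ H.turn1 u → H.succ u ⊆ W₁₂ := by
          intro u hu ht v hv
          have hvU₂ : v ∈ U₂ := fU₂p2 u (hW₁₂U₂ hu) ht hv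
          have hvr : v ∈ (restrict H U₂).succ u := by
            rw [frestr₂ u (hW₁₂U₂ hu)]
            exact ⟨hv, hvU₂⟩
          exact hp2stay₂ u hu ht hvr
        refine ⟨W₁₂, D ∪ W₂₂, nxt, ?_, hvalid, hp1S, hp2S, ?_, ?_⟩
        · ext x
          constructor
          · rintro (hx | hx | hx)
            · exact (hW₁₂U₂ hx).1
            · exact hx.1
            · exact (hW₂₂U₂ hx).1
          · intro hx
            by_cases hxD : x ∈ D
            · exact Or.inr (Or.inl hxD)
            · have hx2 : x ∈ W₁₂ ∪ W₂₂ := hunion₂ ▸ (⟨hx, hxD⟩ : x ∈ U₂)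
              rcases hx2 with h | h
              · exact Or.inl h
              · exact Or.inr (Or.inr h)
        · -- soundness on W₁₂
          intro u hu p hp0 hpl hpcons
          have hstay : ∀ k, p k ∈ W₁₂ := by
            intro k
            induction k with
            | zero => rw [hp0]; exact hu
            | succ k ihk =>
              by_cases ht : H.turn1 (p k)
              · rw [hpcons k ht]; exact hp1S (p k) ihk ht
              · exact hp2S (p k) ihk ht (hpl k)
          have hplay₂ : IsPlay (restrict H U₂) p := by
            intro k
            rw [frestr₂ (p k) (hW₁₂U₂ (hstay k))]
            exact ⟨hpl k, hW₁₂U₂ (hstay (k+1))⟩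
          have hcons₂ : ∀ k, (restrict H U₂).turn1 (p k) → p (k+1) = nxt₂ (p k) := by
            intro k ht
            rw [hpcons k ht]
            simp only [hnxt]
            rw [if_pos (hW₁₂U₂ (hstay k))]
          exact hS₂ (p 0) (hstay 0) p rfl hplay₂ hcons₂
        · -- the composed spoiler on D ∪ W₂₂
          intro σ hσ h u hu
          have SPOIL' : ∀ σ₀, ValidStrategy H σ₀ → ∀ (h₀ : List Q) (w : Q), w ∈ W₂' →
              ∃ p, p 0 = w ∧ IsPlay H p ∧ ConsFrom H σ₀ h₀ p ∧ (∀ k, p k ∈ W₂') ∧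
                ¬ Obj A B J p :=
            spoiler_transfer hW₂'U' fU'p1 hC'
          have SPOILD : ∀ (h₀ : List Q) (w : Q), w ∈ D →
              ∃ p, p 0 = w ∧ IsPlay H p ∧ ConsFrom H σ h₀ p ∧ (∀ k, p k ∈ D) ∧
                ¬ Obj A B J p := by
            intro h₀ w hw
            obtain ⟨m, hm⟩ := Set.mem_iUnion.mp hw.2
            obtain ⟨l, q, hq0, hqpath, hqT, hqmem⟩ := att2_reach hσ m h₀ w hm
            have hqU : ∀ k ≤ l, q k ∈ U := path_mem_closed hclosed hqpath (hq0 ▸ hw.1)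
            obtain ⟨p', hp'0, hp'l, hp'c, hp'W, hp'Obj⟩ := SPOIL' σ hσ (h₀ ++ hist q l) (q l) hqT
            obtain ⟨hgl, hgc⟩ := glue_play hqpath hp'0 hp'l hp'c
            refine ⟨pglue q l p', ?_, hgl, hgc, ?_, ?_⟩
            · rw [pglue_eq_q hp'0 (Nat.zero_le l)]
              exact hq0
            · intro k
              rcases le_or_gt k l with hk | hk
              · rw [pglue_eq_q hp'0 hk]
                exact ⟨hqU k hk, Set.mem_iUnion.mpr ⟨m, hqmem k hk⟩⟩
              · rw [pglue_ge (le_of_lt hk)]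
                exact hW₂'D (hp'W (k - l))
            · intro hObj
              apply hp'Obj
              have heq : (fun k => pglue q l p' (k + l)) = p' := by
                funext k
                rw [pglue_ge (by omega), Nat.add_sub_cancel]
              rw [← heq]
              exact (obj_shift l).mpr hObj
          rcases hu with huD | huW
          · obtain ⟨p, hp0, hpl, hpc, hpD, hpObj⟩ := SPOILD h u huD
            exact ⟨p, hp0, hpl, hpc, fun k => Or.inl (hpD k), hpObj⟩
          · set σ₂ : List Q → Q → Q := fun h' w =>
              if σ h' w ∈ (restrict H U₂).succ w then σ h' w else anySucc (restrict H U₂) w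
              with hσ₂
            have hσ₂v : ValidStrategy (restrict H U₂) σ₂ := by
              intro h' w
              simp only [hσ₂]
              split_ifs with hc
              · exact hc
              · exact anySucc_mem (restrict H U₂) w
            obtain ⟨p'', hp''0, hp''l, hp''c, hp''W, hp''Obj⟩ := hC₂ σ₂ hσ₂v h u huW
            by_cases hconf : ∀ k, H.turn1 (p'' k) →
                σ (h ++ hist p'' k) (p'' k) ∈ (restrict H U₂).succ (p'' k)
            · refine ⟨p'', hp''0, fun k => restrict_succ_subset H U₂ _ (hp''l k), ?_,
                fun k => Or.inr (hp''W k), hp''Obj⟩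
              intro k ht
              rw [hp''c k ht]
              simp only [hσ₂]
              rw [if_pos (hconf k ht)]
            · push_neg at hconf
              have hfind : ∃ k, H.turn1 (p'' k) ∧
                  σ (h ++ hist p'' k) (p'' k) ∉ (restrict H U₂).succ (p'' k) := hconf
              set k₀ : ℕ := Nat.find hfind with hk₀def
              have hk₀ := Nat.find_spec hfind
              have hmin : ∀ j < k₀, ¬ (H.turn1 (p'' j) ∧
                  σ (h ++ hist p'' j) (p'' j) ∉ (restrict H U₂).succ (p'' j)) :=
                fun j hj => Nat.find_min hfind hj
              have hpref : PathOn H σ h p'' k₀ := by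
                constructor
                · intro k _
                  exact restrict_succ_subset H U₂ _ (hp''l k)
                · intro k hk ht
                  have hconfk : σ (h ++ hist p'' k) (p'' k) ∈ (restrict H U₂).succ (p'' k) := by
                    by_contra hcc
                    exact hmin k hk ⟨ht, hcc⟩
                  rw [hp''c k ht]
                  simp only [hσ₂]
                  rw [if_pos hconfk]
              set v : Q := σ (h ++ hist p'' k₀) (p'' k₀) with hv
              have hvsucc : v ∈ H.succ (p'' k₀) := hσ _ _
              have hvU : v ∈ U := hclosed _ (hW₂₂U₂ (hp''W k₀)).1 hvsucc
              have hvD : v ∈ D := by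
                by_contra hvD
                apply hk₀.2
                rw [frestr₂ _ (hW₂₂U₂ (hp''W k₀))]
                exact ⟨hvsucc, hvU, hvD⟩
              have honestep : PathOn H σ (h ++ hist p'' k₀) (pcons (p'' k₀) (fun _ => v)) 1 := by
                constructor
                · intro k hk
                  have hk0 : k = 0 := by omega
                  subst hk0
                  simpa using hvsucc
                · intro k hk ht
                  have hk0 : k = 0 := by omega
                  subst hk0
                  simp only [pcons_succ, pcons_zero, hist_zero, List.append_nil]
                  exact hv
              have hext : PathOn H σ h (pglue p'' k₀ (pcons (p'' k₀) (fun _ => v))) (k₀ + 1) :=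
                glue_path hpref rfl honestep
              set qq1 : ℕ → Q := pglue p'' k₀ (pcons (p'' k₀) (fun _ => v)) with hqq1
              have hpc0 : (pcons (p'' k₀) (fun _ => v)) 0 = p'' k₀ := rfl
              have hq1eq : ∀ k ≤ k₀, qq1 k = p'' k := fun k hk => pglue_eq_q hpc0 hk
              have hq1top : qq1 (k₀ + 1) = v := by
                rw [hqq1, pglue_ge (by omega)]
                have hsub : k₀ + 1 - k₀ = 1 := by omega
                rw [hsub]
                rfl
              obtain ⟨pd, hpd0, hpdl, hpdc, hpdD, hpdObj⟩ :=
                SPOILD (h ++ hist qq1 (k₀ + 1)) v hvD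
              have hpd0' : pd 0 = qq1 (k₀ + 1) := by rw [hq1top]; exact hpd0
              obtain ⟨hgl, hgc⟩ := glue_play hext hpd0' hpdl hpdc
              refine ⟨pglue qq1 (k₀ + 1) pd, ?_, hgl, hgc, ?_, ?_⟩
              · rw [pglue_eq_q hpd0' (Nat.zero_le _), hq1eq 0 (Nat.zero_le k₀)]
                exact hp''0
              · intro k
                rcases Nat.lt_or_ge k (k₀ + 1) with hk | hk
                · rw [pglue_lt hk, hq1eq k (by omega)]
                  exact Or.inr (hp''W k)
                · rw [pglue_ge hk]
                  exact Or.inl (hpdD (k - (k₀ + 1)))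
              · intro hObj
                apply hpdObj
                have heq : (fun k => pglue qq1 (k₀ + 1) pd (k + (k₀ + 1))) = pd := by
                  funext k
                  rw [pglue_ge (by omega), Nat.add_sub_cancel]
                rw [← heq]
                exact (obj_shift (k₀ + 1)).mpr hObj
    · -- CASE 2 : no J-states in U
      have hJU' : J ∩ U = ∅ := Set.not_nonempty_iff_eq_empty.mp hJU
      set SA : Set Q := Saf H (A ∩ U) with hSA
      set SB : Set Q := Saf H (B ∩ U) with hSB
      set M : Set Q := U ∩ Att1 H (SA ∪ SB) with hM
      by_cases hMne : M.Nonempty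
      · -- attract to the safety regions, recurse on the rest
        set U₃ : Set Q := U \ M with hU₃
        have fU₃lt : U₃.ncard < U.ncard := by
          apply Set.ncard_lt_ncard _ (Set.toFinite U)
          constructor
          · exact Set.diff_subset
          · intro hsub
            obtain ⟨x, hx⟩ := hMne
            exact (hsub hx.1).2 hx
        have fU₃p1 : ∀ u ∈ U₃, H.turn1 u → H.succ u ⊆ U₃ := by
          intro u hu ht v hv
          refine ⟨hclosed u hu.1 hv, fun hvM => hu.2 ?_⟩
          obtain ⟨k, hk⟩ := Set.mem_iUnion.mp hvM.2
          exact ⟨hu.1, Set.mem_iUnion.mpr ⟨k+1,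
            Or.inr ⟨fun _ => ⟨v, hv, hk⟩, fun h' => absurd ht h'⟩⟩⟩
        have fU₃ne : ∀ u ∈ U₃, (H.succ u ∩ U₃).Nonempty := by
          intro u hu
          by_cases ht : H.turn1 u
          · obtain ⟨v, hv⟩ := H.succ_nonempty u
            exact ⟨v, hv, fU₃p1 u hu ht hv⟩
          · by_contra hc
            rw [Set.not_nonempty_iff_eq_empty] at hc
            have hsub : H.succ u ⊆ Att1 H (SA ∪ SB) := by
              intro v hv
              have hvU : v ∈ U := hclosed u hu.1 hv
              have hv' : v ∉ U₃ := fun hv' => (Set.eq_empty_iff_forall_notMem.mp hc v) ⟨hv, hv'⟩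
              have hvM : v ∈ M := by
                by_contra hvM
                exact hv' ⟨hvU, hvM⟩
              exact hvM.2
            obtain ⟨K, hK⟩ := finite_subset_chain (fun hkl => att1_mono H _ hkl)
              (Set.toFinite _) hsub
            exact hu.2 ⟨hu.1, Set.mem_iUnion.mpr ⟨K+1,
              Or.inr ⟨fun h' => absurd h' ht, fun _ v hv => hK hv⟩⟩⟩
        have frestr₃ : ∀ u ∈ U₃, (restrict H U₃).succ u = H.succ u ∩ U₃ :=
          fun u hu => restrict_succ_eq (fU₃ne u hu)
        have fU₃closed : ∀ u ∈ U₃, (restrict H U₃).succ u ⊆ U₃ := by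
          intro u hu
          rw [frestr₃ u hu]
          exact Set.inter_subset_right
        obtain ⟨W₁₃, W₂₃, nxt₃, hunion₃, hvalid₃, hp1stay₃, hp2stay₃, hS₃, hC₃⟩ :=
          ih (restrict H U₃) U₃ (by omega) fU₃closed
        have hW₁₃U₃ : W₁₃ ⊆ U₃ := hunion₃ ▸ Set.subset_union_left
        have hW₂₃U₃ : W₂₃ ⊆ U₃ := hunion₃ ▸ Set.subset_union_right
        have hSAM : SA ⊆ M := fun x hx => ⟨(Saf_subset H _ hx).2, subset_Att1 H _ (Or.inl hx)⟩
        have hSBM : SB ⊆ M := fun x hx => ⟨(Saf_subset H _ hx).2, subset_Att1 H _ (Or.inr hx)⟩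
        set nxt : Q → Q := fun u =>
          if u ∈ SA then safChoice H (A ∩ U) u
          else if u ∈ SB then safChoice H (B ∩ U) u
          else if u ∈ M then attChoice1 H (SA ∪ SB) u
          else if u ∈ U₃ then nxt₃ u
          else anySucc H u with hnxt
        have hvalid : ∀ u, nxt u ∈ H.succ u := by
          intro u
          simp only [hnxt]
          split_ifs with h1 h2 h3 h4
          · exact safChoice_mem_succ H _ u
          · exact safChoice_mem_succ H _ u
          · exact attChoice1_mem_succ H _ u
          · exact restrict_succ_subset H U₃ u (hvalid₃ u)
          · exact anySucc_mem H u
        have hp1S : ∀ u ∈ M ∪ W₁₃, H.turn1 u → nxt u ∈ M ∪ W₁₃ := by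
          intro u hu ht
          simp only [hnxt]
          by_cases h1 : u ∈ SA
          · rw [if_pos h1]
            exact Or.inl (hSAM (safChoice_spec ht h1))
          · rw [if_neg h1]
            by_cases h2 : u ∈ SB
            · rw [if_pos h2]
              exact Or.inl (hSBM (safChoice_spec ht h2))
            · rw [if_neg h2]
              by_cases h3 : u ∈ M
              · rw [if_pos h3]
                refine Or.inl ⟨hclosed u h3.1 (attChoice1_mem_succ H _ u), ?_⟩
                have hT : u ∉ SA ∪ SB := by rintro (h | h); exacts [h1 h, h2 h]
                exact Set.mem_iUnion.mpr ⟨_, attChoice1_spec ht h3.2 hT⟩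
              · rw [if_neg h3]
                have huW : u ∈ W₁₃ := hu.resolve_left h3
                rw [if_pos (hW₁₃U₃ huW)]
                exact Or.inr (hp1stay₃ u huW ht)
        have hp2S : ∀ u ∈ M ∪ W₁₃, ¬ H.turn1 u → H.succ u ⊆ M ∪ W₁₃ := by
          intro u hu ht v hv
          rcases hu with huM | huW
          · by_cases h1 : u ∈ SA
            · exact Or.inl (hSAM ((Saf_closed H (A ∩ U) h1).2 ht v hv))
            · by_cases h2 : u ∈ SB
              · exact Or.inl (hSBM ((Saf_closed H (B ∩ U) h2).2 ht v hv))
              · have hT : u ∉ SA ∪ SB := by rintro (h | h); exacts [h1 h, h2 h]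
                have hrpos := rk1_pos huM.2
                obtain ⟨r, hr'⟩ : ∃ r, rk1 H (SA ∪ SB) u = r + 1 :=
                  ⟨rk1 H (SA ∪ SB) u - 1, by omega⟩
                have hr := rk1_spec huM.2
                rw [hr'] at hr
                have hcp : u ∈ cpre1 H (att1 H (SA ∪ SB) r) := hr.resolve_left hT
                exact Or.inl ⟨hclosed u huM.1 hv, Set.mem_iUnion.mpr ⟨r, hcp.2 ht v hv⟩⟩
          · have hvU : v ∈ U := hclosed u (hW₁₃U₃ huW).1 hv
            by_cases hvM : v ∈ M
            · exact Or.inl hvM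
            · have hvr : v ∈ (restrict H U₃).succ u := by
                rw [frestr₃ u (hW₁₃U₃ huW)]
                exact ⟨hv, hvU, hvM⟩
              exact Or.inr (hp2stay₃ u huW ht hvr)
        refine ⟨M ∪ W₁₃, W₂₃, nxt, ?_, hvalid, hp1S, hp2S, ?_, ?_⟩
        · ext x
          constructor
          · rintro ((hx | hx) | hx)
            · exact hx.1
            · exact (hW₁₃U₃ hx).1
            · exact (hW₂₃U₃ hx).1
          · intro hx
            by_cases hxM : x ∈ M
            · exact Or.inl (Or.inl hxM)
            · have hx3 : x ∈ W₁₃ ∪ W₂₃ := hunion₃ ▸ (⟨hx, hxM⟩ : x ∈ U₃)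
              rcases hx3 with h | h
              · exact Or.inl (Or.inr h)
              · exact Or.inr h
        · -- soundness of the strategy
          intro u hu p hp0 hpl hpcons
          have hstay : ∀ k, p k ∈ M ∪ W₁₃ := by
            intro k
            induction k with
            | zero => rw [hp0]; exact hu
            | succ k ihk =>
              by_cases ht : H.turn1 (p k)
              · rw [hpcons k ht]
                exact hp1S (p k) ihk ht
              · exact hp2S (p k) ihk ht (hpl k)
          by_cases hM' : ∃ t, p t ∈ M
          · obtain ⟨t, htM⟩ := hM'
            have hstep : ∀ k j, p k ∈ att1 H (SA ∪ SB) (j+1) → p k ∉ SA ∪ SB →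
                p (k+1) ∈ att1 H (SA ∪ SB) j := by
              intro k j hk hT
              have h1 : p k ∉ SA := fun h => hT (Or.inl h)
              have h2 : p k ∉ SB := fun h => hT (Or.inr h)
              by_cases ht : H.turn1 (p k)
              · have hpkU : p k ∈ U := by
                  rcases hstay k with h | h
                  · exact h.1
                  · exact (hW₁₃U₃ h).1
                have hpkM : p k ∈ M := ⟨hpkU, Set.mem_iUnion.mpr ⟨j+1, hk⟩⟩
                rw [hpcons k ht]
                simp only [hnxt]
                rw [if_neg h1, if_neg h2, if_pos hpkM]
                have hch := attChoice1_spec ht hpkM.2 hT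
                have hle : rk1 H (SA ∪ SB) (p k) - 1 ≤ j := by
                  have := rk1_le hk
                  omega
                exact att1_mono H _ hle hch
              · have hcp : p k ∈ cpre1 H (att1 H (SA ∪ SB) j) := hk.resolve_left hT
                exact hcp.2 ht (p (k+1)) (hpl k)
            obtain ⟨m, hm⟩ := Set.mem_iUnion.mp htM.2
            obtain ⟨t', _, _, ht'3⟩ := att1_descent hstep m t hm
            by_cases hA' : ∃ t₂, p t₂ ∈ SA
            · obtain ⟨t₂, hA2⟩ := hA'
              have hfwd : ∀ k, p (t₂ + k) ∈ SA := by
                intro k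
                induction k with
                | zero => exact hA2
                | succ k ihk =>
                  have haddsucc : t₂ + (k+1) = (t₂ + k) + 1 := rfl
                  by_cases ht : H.turn1 (p (t₂ + k))
                  · rw [haddsucc, hpcons _ ht]
                    simp only [hnxt]
                    rw [if_pos ihk]
                    exact safChoice_spec ht ihk
                  · rw [haddsucc]
                    exact (Saf_closed H _ ihk).2 ht _ (hpl _)
              refine Or.inl ⟨t₂, fun k hk => ?_⟩
              obtain ⟨j, rfl⟩ := Nat.exists_eq_add_of_le hk
              exact (Saf_subset H _ (hfwd j)).1
            · push_neg at hA'
              have hB2 : p t' ∈ SB := ht'3.resolve_left (hA' t')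
              have hfwd : ∀ k, p (t' + k) ∈ SB := by
                intro k
                induction k with
                | zero => exact hB2
                | succ k ihk =>
                  have haddsucc : t' + (k+1) = (t' + k) + 1 := rfl
                  by_cases ht : H.turn1 (p (t' + k))
                  · rw [haddsucc, hpcons _ ht]
                    simp only [hnxt]
                    rw [if_neg (hA' _), if_pos ihk]
                    exact safChoice_spec ht ihk
                  · rw [haddsucc]
                    exact (Saf_closed H _ ihk).2 ht _ (hpl _)
              refine Or.inr (Or.inl ⟨t', fun k hk => ?_⟩)
              obtain ⟨j, rfl⟩ := Nat.exists_eq_add_of_le hk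
              exact (Saf_subset H _ (hfwd j)).1
          · push_neg at hM'
            have hstay₃ : ∀ k, p k ∈ W₁₃ := fun k => (hstay k).resolve_left (hM' k)
            have hplay₃ : IsPlay (restrict H U₃) p := by
              intro k
              rw [frestr₃ (p k) (hW₁₃U₃ (hstay₃ k))]
              exact ⟨hpl k, hW₁₃U₃ (hstay₃ (k+1))⟩
            have hcons₃ : ∀ k, (restrict H U₃).turn1 (p k) → p (k+1) = nxt₃ (p k) := by
              intro k ht
              rw [hpcons k ht]
              simp only [hnxt]
              have h3 : p k ∉ M := hM' k
              have h1 : p k ∉ SA := fun h => h3 (hSAM h)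
              have h2 : p k ∉ SB := fun h => h3 (hSBM h)
              rw [if_neg h1, if_neg h2, if_neg h3, if_pos (hW₁₃U₃ (hstay₃ k))]
            exact hS₃ (p 0) (hstay₃ 0) p rfl hplay₃ hcons₃
        · -- spoiler via transfer from the subgame
          exact spoiler_transfer hW₂₃U₃ fU₃p1 hC₃
      · -- no safety regions: player 2 spoils everywhere
        have hMempty : M = ∅ := Set.not_nonempty_iff_eq_empty.mp hMne
        have hSAempty : SA = ∅ := by
          rw [Set.eq_empty_iff_forall_notMem]
          intro x hx
          have hxU : x ∈ U := (Saf_subset H (A ∩ U) hx).2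
          have hxM : x ∈ M := ⟨hxU, subset_Att1 H _ (Or.inl hx)⟩
          rw [hMempty] at hxM
          exact hxM
        have hSBempty : SB = ∅ := by
          rw [Set.eq_empty_iff_forall_notMem]
          intro x hx
          have hxU : x ∈ U := (Saf_subset H (B ∩ U) hx).2
          have hxM : x ∈ M := ⟨hxU, subset_Att1 H _ (Or.inr hx)⟩
          rw [hMempty] at hxM
          exact hxM
        refine ⟨∅, U, anySucc H, by simp, anySucc_mem H, by simp, by simp, by simp, ?_⟩
        intro σ hσ h u huU
        have exitA : ∀ (h1 : List Q) (u1 : Q), u1 ∈ U →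
            ∃ l q, q 0 = u1 ∧ PathOn H σ h1 q l ∧ (∀ k ≤ l, q k ∈ U) ∧ q l ∉ A := by
          intro h1 u1 hu1
          have hnotsaf : ∃ r, u1 ∉ saf H (A ∩ U) r := by
            by_contra hc
            push_neg at hc
            have hx : u1 ∈ SA := Set.mem_iInter.mpr hc
            rw [hSAempty] at hx
            exact hx
          obtain ⟨r₁, hr₁⟩ := hnotsaf
          obtain ⟨l₁, q₁, hq₁0, hq₁path, hq₁A⟩ := saf_exit hσ r₁ h1 u1 hr₁
          have hq₁U : ∀ k ≤ l₁, q₁ k ∈ U := path_mem_closed hclosed hq₁path (hq₁0 ▸ hu1)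
          exact ⟨l₁, q₁, hq₁0, hq₁path, hq₁U, fun hA => hq₁A ⟨hA, hq₁U l₁ le_rfl⟩⟩
        have exitB : ∀ (h1 : List Q) (u1 : Q), u1 ∈ U →
            ∃ l q, q 0 = u1 ∧ PathOn H σ h1 q l ∧ (∀ k ≤ l, q k ∈ U) ∧ q l ∉ B := by
          intro h1 u1 hu1
          have hnotsaf : ∃ r, u1 ∉ saf H (B ∩ U) r := by
            by_contra hc
            push_neg at hc
            have hx : u1 ∈ SB := Set.mem_iInter.mpr hc
            rw [hSBempty] at hx
            exact hx
          obtain ⟨r₁, hr₁⟩ := hnotsaf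
          obtain ⟨l₁, q₁, hq₁0, hq₁path, hq₁A⟩ := saf_exit hσ r₁ h1 u1 hr₁
          have hq₁U : ∀ k ≤ l₁, q₁ k ∈ U := path_mem_closed hclosed hq₁path (hq₁0 ▸ hu1)
          exact ⟨l₁, q₁, hq₁0, hq₁path, hq₁U, fun hB => hq₁A ⟨hB, hq₁U l₁ le_rfl⟩⟩
        have SEG : ∀ (h1 : List Q) (u1 : Q), u1 ∈ U → ∃ (m : ℕ) (q : ℕ → Q), 0 < m ∧ q 0 = u1 ∧
            PathOn H σ h1 q m ∧ (∀ k ≤ m, q k ∈ U) ∧ (∃ k ≤ m, q k ∉ A) ∧ (∃ k ≤ m, q k ∉ B) := by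
          intro h1 u1 hu1
          obtain ⟨l₁, q₁, hq₁0, hq₁path, hq₁U, hq₁A⟩ := exitA h1 u1 hu1
          obtain ⟨l₂, q₂, hq₂0, hq₂path, hq₂U, hq₂B⟩ :=
            exitB (h1 ++ hist q₁ l₁) (q₁ l₁) (hq₁U l₁ le_rfl)
          -- one extra step after exiting B
          set w₂ : Q := q₂ l₂ with hw₂def
          set v : Q := if H.turn1 w₂ then σ ((h1 ++ hist q₁ l₁ ++ hist q₂ l₂)) w₂ else anySucc H w₂
            with hvdef
          have hvsucc : v ∈ H.succ w₂ := by
            rw [hvdef]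
            split
            · exact hσ _ _
            · exact anySucc_mem H w₂
          have hq₃path : PathOn H σ (h1 ++ hist q₁ l₁ ++ hist q₂ l₂) (pcons w₂ (fun _ => v)) 1 := by
            constructor
            · intro k hk
              have hk0 : k = 0 := by omega
              subst hk0
              simpa using hvsucc
            · intro k hk ht
              have hk0 : k = 0 := by omega
              subst hk0
              simp only [pcons_zero] at ht
              simp only [pcons_succ, pcons_zero, hist_zero, List.append_nil]
              rw [hvdef, if_pos ht]
          have hglue2 : PathOn H σ (h1 ++ hist q₁ l₁) (pglue q₂ l₂ (pcons w₂ (fun _ => v))) (l₂ + 1) :=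
            glue_path hq₂path rfl hq₃path
          have hpc0 : (pcons w₂ (fun _ => v)) 0 = q₂ l₂ := rfl
          have hinner0 : pglue q₂ l₂ (pcons w₂ (fun _ => v)) 0 = q₁ l₁ := by
            rw [pglue_eq_q hpc0 (Nat.zero_le l₂)]
            exact hq₂0
          have hglue1 : PathOn H σ h1 (pglue q₁ l₁ (pglue q₂ l₂ (pcons w₂ (fun _ => v)))) (l₁ + (l₂ + 1)) :=
            glue_path hq₁path hinner0 hglue2
          set qq : ℕ → Q := pglue q₁ l₁ (pglue q₂ l₂ (pcons w₂ (fun _ => v))) with hqq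
          have hqq0 : qq 0 = u1 := by
            rw [hqq, pglue_eq_q hinner0 (Nat.zero_le l₁)]
            exact hq₁0
          have hqqU : ∀ k ≤ l₁ + (l₂ + 1), qq k ∈ U :=
            path_mem_closed hclosed hglue1 (hqq0 ▸ hu1)
          refine ⟨l₁ + (l₂ + 1), qq, by omega, hqq0, hglue1, hqqU, ⟨l₁, by omega, ?_⟩,
            ⟨l₁ + l₂, by omega, ?_⟩⟩
          · have : qq l₁ = q₁ l₁ := by
              rw [hqq, pglue_eq_q hinner0 le_rfl]
            rw [this]
            exact hq₁A
          · have : qq (l₁ + l₂) = q₂ l₂ := by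
              rw [hqq, pglue_ge (by omega : l₁ ≤ l₁ + l₂), Nat.add_sub_cancel_left,
                pglue_eq_q hpc0 le_rfl]
            rw [this]
            exact hq₂B
        obtain ⟨p, hp0, hpl, hpc, hpU, hhitA, hhitB⟩ := segments_to_play SEG h u huU
        refine ⟨p, hp0, hpl, hpc, hpU, ?_⟩
        rintro (⟨Nt, hN⟩ | ⟨Nt, hN⟩ | hInf)
        · obtain ⟨k, hk1, hk2⟩ := hhitA Nt
          exact hk2 (hN k hk1)
        · obtain ⟨k, hk1, hk2⟩ := hhitB Nt
          exact hk2 (hN k hk1)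
        · obtain ⟨k, _, hk2⟩ := hInf 0
          have hx : p k ∈ J ∩ U := ⟨hk2, hpU k⟩
          rw [hJU'] at hx
          exact hx

end MB

/-- Zielonka-tree memory bound for
`φ₁ = ◇□F₁ ∨ ◇□F₂ ∨ ⋀_{i≤n} □◇Iᵢ`: in a finite turn-based game, if
player 1 wins surely from `s`, then player 1 has a pure sure winning
strategy from `s` using at most `n` memory states. -/
theorem memory_bound_phi_one {S : Type} [Fintype S] (G : TBGame S)
    (n : ℕ) (hn : 0 < n) (F₁ F₂ : Set S) (I : Fin n → Set S) (s : S)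
    (hwin : ∃ σ : List S → S → S, SureWin G σ s (fun p =>
      EvAlways p F₁ ∨ EvAlways p F₂ ∨ ∀ i : Fin n, InfOften p (I i))) :
    ∃ σ : List S → S → S, FinMemStrategy σ n ∧ SureWin G σ s (fun p =>
      EvAlways p F₁ ∨ EvAlways p F₂ ∨ ∀ i : Fin n, InfOften p (I i)) := by
  classical
  haveI : NeZero n := ⟨by omega⟩
  -- the product game with a `Fin n` counter
  set upd : Fin n → S → Fin n := fun m u => if u ∈ I m then m + 1 else m with hupd
  set H : TBGame (S × Fin n) :=
    { turn1 := fun x => G.turn1 x.1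
      succ := fun x => {y | y.1 ∈ G.succ x.1 ∧ y.2 = upd x.2 x.1}
      succ_nonempty := fun x => by
        obtain ⟨v, hv⟩ := G.succ_nonempty x.1
        exact ⟨(v, upd x.2 x.1), hv, rfl⟩ } with hH
  set A : Set (S × Fin n) := {x | x.1 ∈ F₁} with hA
  set B : Set (S × Fin n) := {x | x.1 ∈ F₂} with hB
  set J : Set (S × Fin n) := {x | x.1 ∈ I x.2} with hJ
  obtain ⟨W₁, W₂, nxt, hunion, hvalid, _, _, hS, hC⟩ :=
    MB.master A B J (Set.univ : Set (S × Fin n)).ncard H Set.univ le_rfl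
      (fun u _ => Set.subset_univ _)
  -- basic facts about product plays
  have hsucc2 : ∀ (x y : S × Fin n), y ∈ H.succ x → y.2 = upd x.2 x.1 := by
    intro x y hy
    exact hy.2
  -- step 1 : (s, 0) is in the positional winning region
  have hs0 : (s, (0 : Fin n)) ∈ W₁ := by
    have hmem : (s, (0 : Fin n)) ∈ W₁ ∪ W₂ := by
      rw [hunion]; exact Set.mem_univ _
    rcases hmem with h | h
    · exact h
    · exfalso
      obtain ⟨σ₀, hσ₀v, hσ₀w⟩ := hwin
      set σh : List (S × Fin n) → (S × Fin n) → (S × Fin n) :=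
        fun hl x => (σ₀ (hl.map Prod.fst) x.1, upd x.2 x.1) with hσh
      have hσhv : ValidStrategy H σh := by
        intro hl x
        exact ⟨hσ₀v (hl.map Prod.fst) x.1, rfl⟩
      obtain ⟨q, hq0, hql, hqc, _, hqObj⟩ := hC σh hσhv [] (s, 0) h
      set p : ℕ → S := fun k => (q k).1 with hp
      have hp0 : p 0 = s := by
        show (q 0).1 = s
        rw [hq0]
      have hpl : IsPlay G p := fun k => (hql k).1
      have hpc : Consistent G σ₀ p := by
        intro k ht
        have hthis := hqc k ht
        rw [List.nil_append] at hthis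
        show (q (k+1)).1 = σ₀ (List.ofFn fun i : Fin k => p i) (q k).1
        rw [hthis, hσh]
        show σ₀ ((MB.hist q k).map Prod.fst) (q k).1 = _
        congr 1
        simp only [MB.hist, List.map_ofFn]
        rfl
      have hφ := hσ₀w p hp0 hpl hpc
      apply hqObj
      have hmemstep : ∀ k, (q (k+1)).2 = upd (q k).2 (p k) := fun k => (hql k).2
      rcases hφ with ⟨Nt, hNt⟩ | ⟨Nt, hNt⟩ | hinf
      · exact Or.inl ⟨Nt, fun k hk => hNt k hk⟩
      · exact Or.inr (Or.inl ⟨Nt, fun k hk => hNt k hk⟩)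
      · refine Or.inr (Or.inr ?_)
        by_contra hnot
        unfold InfOften at hnot
        push_neg at hnot
        obtain ⟨Nt, hNt⟩ := hnot
        have hconst : ∀ k, Nt ≤ k → (q k).2 = (q Nt).2 := by
          intro k hk
          obtain ⟨d, rfl⟩ := Nat.exists_eq_add_of_le hk
          induction d with
          | zero => rfl
          | succ d ihd =>
            have haddsucc : Nt + (d+1) = (Nt + d) + 1 := rfl
            rw [haddsucc, hmemstep (Nt + d)]
            have hnj : p (Nt + d) ∉ I ((q (Nt + d)).2) := by
              have := hNt (Nt + d) (by omega)
              exact this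
            rw [hupd]
            simp only [if_neg hnj]
            exact ihd (by omega)
        obtain ⟨k, hk1, hk2⟩ := hinf ((q Nt).2) Nt
        have : q k ∈ J := by
          rw [hJ]
          show p k ∈ I ((q k).2)
          rw [hconst k hk1]
          exact hk2
        exact hNt k hk1 this
  -- step 2 : the finite-memory strategy
  set nxt' : Fin n → S → S := fun m u => (nxt (u, m)).1 with hnxt'
  refine ⟨fun hl u => nxt' (hl.foldl upd 0) u, ⟨Fin n, inferInstance, by simp, 0, upd, nxt', rfl⟩,
    ?_, ?_⟩
  · intro hl u
    exact (hvalid (u, hl.foldl upd 0)).1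
  · intro p hp0 hpl hpc
    set mem : ℕ → Fin n := fun k => Nat.rec (0 : Fin n) (fun k ih => upd ih (p k)) k with hmem
    have hmem0 : mem 0 = 0 := rfl
    have hmemS : ∀ k, mem (k+1) = upd (mem k) (p k) := fun k => rfl
    have hfold : ∀ k, (MB.hist p k).foldl upd 0 = mem k := by
      intro k
      induction k with
      | zero => rfl
      | succ k ihk =>
        rw [MB.hist_succ, List.foldl_append, ihk, hmemS]
        rfl
    set q : ℕ → S × Fin n := fun k => (p k, mem k) with hq
    have hql : IsPlay H q := by
      intro k
      exact ⟨hpl k, hmemS k⟩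
    have hqc : ∀ k, H.turn1 (q k) → q (k+1) = nxt (q k) := by
      intro k ht
      have h1 : p (k+1) = (nxt (q k)).1 := by
        have := hpc k ht
        rw [this]
        show nxt' ((List.ofFn fun i : Fin k => p i).foldl upd 0) (p k) = (nxt (q k)).1
        rw [show (List.ofFn fun i : Fin k => p i) = MB.hist p k from rfl, hfold k]
      have h2 : mem (k+1) = (nxt (q k)).2 := by
        rw [hmemS k, (hvalid (q k)).2]
      have : q (k+1) = ((nxt (q k)).1, (nxt (q k)).2) := by
        rw [hq]
        exact Prod.ext h1 h2
      rw [this]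
    have hobj := hS (s, 0) hs0 q (by rw [hq]; exact Prod.ext hp0 hmem0) hql hqc
    rcases hobj with ⟨Nt, hNt⟩ | ⟨Nt, hNt⟩ | hinf
    · exact Or.inl ⟨Nt, fun k hk => hNt k hk⟩
    · exact Or.inr (Or.inl ⟨Nt, fun k hk => hNt k hk⟩)
    · refine Or.inr (Or.inr ?_)
      -- the counter cycles through all values
      have hit : ∀ N, ∃ k ≥ N, p k ∈ I (mem k) := fun N => hinf N
      open Fin.NatCast in
      have cyc : ∀ N, ∃ c₀ : Fin n, ∀ j : ℕ, ∃ k ≥ N, p k ∈ I (mem k) ∧ mem k = c₀ + (j : Fin n) := by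
        intro N
        obtain ⟨k₀, hk₀1, hk₀2⟩ := hit N
        refine ⟨mem k₀, ?_⟩
        intro j
        induction j with
        | zero => exact ⟨k₀, hk₀1, hk₀2, by simp⟩
        | succ j ihj =>
          obtain ⟨k, hk1, hk2, hk3⟩ := ihj
          have hnext : ∃ t, t ≥ k + 1 ∧ p t ∈ I (mem t) := by
            obtain ⟨t, ht1, ht2⟩ := hit (k+1)
            exact ⟨t, ht1, ht2⟩
          set k' : ℕ := Nat.find hnext with hk'def
          have hk'spec := Nat.find_spec hnext
          have hk'min : ∀ t < k', ¬ (t ≥ k + 1 ∧ p t ∈ I (mem t)) :=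
            fun t ht => Nat.find_min hnext ht
          have hk'ge : k + 1 ≤ k' := hk'spec.1
          have hconst : ∀ d, k + 1 + d ≤ k' → mem (k + 1 + d) = mem (k + 1) := by
            intro d
            induction d with
            | zero => intro _; rfl
            | succ d ihd =>
              intro hd
              have haddsucc : k + 1 + (d+1) = (k + 1 + d) + 1 := rfl
              rw [haddsucc, hmemS]
              have hno : p (k + 1 + d) ∉ I (mem (k + 1 + d)) := by
                intro hyes
                exact hk'min (k + 1 + d) (by omega) ⟨by omega, hyes⟩
              rw [hupd]
              simp only [if_neg hno]
              exact ihd (by omega)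
          have hm1 : mem (k + 1) = mem k + 1 := by
            rw [hmemS, hupd]
            simp only [if_pos hk2]
          have hmk' : mem k' = mem k₀ + ((j : Fin n) + 1) := by
            have hd : k + 1 + (k' - (k + 1)) = k' := by omega
            have := hconst (k' - (k + 1)) (by omega)
            rw [hd] at this
            rw [this, hm1, hk3]
            abel
          refine ⟨k', by omega, hk'spec.2, ?_⟩
          rw [hmk']
          push_cast
          ring
      intro i N
      obtain ⟨c₀, hc₀⟩ := cyc N
      obtain ⟨k, hk1, hk2, hk3⟩ := hc₀ ((i - c₀ : Fin n) : ℕ)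
      refine ⟨k, hk1, ?_⟩
      have : mem k = i := by
        rw [hk3, Fin.cast_val_eq_self]
        abel
      rw [← this]
      exact hk2
end

section
/- If a run r satisfies □◇ tick → Φ and ¬□◇ tick → ◇□ ¬bl₁, then r belongs to TimeDivBl₁(Φ) := (TimeDiv ∩ Φ) ∪ (Blameless₁ \ TimeDiv), and conversely, provided tick marks exactly the steps at which accumulated time crosses an integer boundary and bl₁ marks exactly the steps where player 1's move was chosen. -/
open Filter

/-- Encoding of the time-divergence/blamelessness objective
`TimeDivBl₁(Φ) = (TimeDiv ∩ Φ) ∪ (Blameless₁ \ TimeDiv)` via the `tick` and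
`bl₁` predicates: a run belongs to `TimeDivBl₁(Φ)` iff it satisfies
`(□◇tick → Φ) ∧ (¬□◇tick → ◇□¬bl₁)`. -/
theorem timeDivBl_iff_tick_encoding
    (Δ : ℕ → ℝ) (hΔ : ∀ k, 0 ≤ Δ k) (bl : ℕ → Prop)
    (Φ : (ℕ → ℝ) → (ℕ → Prop) → Prop) :
    ((Tendsto (fun k => ∑ j ∈ Finset.range k, Δ j) atTop atTop ∧ Φ Δ bl) ∨
      ({k : ℕ | bl k}.Finite ∧
        ¬ Tendsto (fun k => ∑ j ∈ Finset.range k, Δ j) atTop atTop)) ↔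
    (({k : ℕ | ⌊∑ j ∈ Finset.range k, Δ j⌋ <
        ⌊∑ j ∈ Finset.range (k + 1), Δ j⌋}.Infinite → Φ Δ bl) ∧
      ({k : ℕ | ⌊∑ j ∈ Finset.range k, Δ j⌋ <
        ⌊∑ j ∈ Finset.range (k + 1), Δ j⌋}.Finite → {k : ℕ | bl k}.Finite)) := by
  set S : ℕ → ℝ := fun k => ∑ j ∈ Finset.range k, Δ j with hSdef
  have hmono : Monotone S := fun a b hab =>
    Finset.sum_le_sum_of_subset_of_nonneg (Finset.range_subset_range.2 hab)
      (fun i _ _ => hΔ i)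
  have key : {k : ℕ | ⌊S k⌋ < ⌊S (k + 1)⌋}.Infinite ↔ Tendsto S atTop atTop := by
    constructor
    · intro hinf
      have hstep : ∀ n : ℕ, ∃ k, ⌊S 0⌋ + n ≤ ⌊S k⌋ := by
        intro n
        induction n with
        | zero => exact ⟨0, by simp⟩
        | succ n ih =>
          obtain ⟨k, hk⟩ := ih
          obtain ⟨m, hm, hkm⟩ := hinf.exists_gt k
          have h1 : ⌊S k⌋ ≤ ⌊S m⌋ := Int.floor_le_floor (hmono hkm.le)
          exact ⟨m + 1, by simp only [Set.mem_setOf_eq] at hm; push_cast; omega⟩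
      apply tendsto_atTop_atTop_of_monotone hmono
      intro b
      obtain ⟨n, hn⟩ := exists_nat_ge (b - ⌊S 0⌋)
      obtain ⟨k, hk⟩ := hstep n
      refine ⟨k, ?_⟩
      have h2 : (⌊S k⌋ : ℝ) ≤ S k := Int.floor_le (S k)
      have h3 : ((⌊S 0⌋ + n : ℤ) : ℝ) ≤ (⌊S k⌋ : ℝ) := by exact_mod_cast hk
      push_cast at h3
      linarith
    · intro ht
      by_contra hfin
      rw [Set.not_infinite] at hfin
      obtain ⟨N, hN⟩ := hfin.bddAbove
      have hconst : ∀ k, N + 1 ≤ k → ⌊S k⌋ = ⌊S (N + 1)⌋ := by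
        intro k hk
        induction k with
        | zero => omega
        | succ k ih =>
          rcases Nat.lt_or_ge k (N + 1) with h | h
          · have : k = N := by omega
            subst this; rfl
          · have hk' : ⌊S k⌋ = ⌊S (N + 1)⌋ := ih h
            have hle : ⌊S k⌋ ≤ ⌊S (k + 1)⌋ := Int.floor_le_floor (hmono (by omega))
            have : ¬ (⌊S k⌋ < ⌊S (k + 1)⌋) := by
              intro hlt
              have := hN hlt
              omega
            omega
      have hbdd : ∀ k, S k < (⌊S (N + 1)⌋ : ℝ) + 1 := by
        intro k
        rcases Nat.lt_or_ge k (N + 1) with h | h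
        · calc S k ≤ S (N + 1) := hmono h.le
            _ < ⌊S (N + 1)⌋ + 1 := Int.lt_floor_add_one _
        · have := Int.lt_floor_add_one (S k)
          rw [hconst k h] at this
          exact this
      obtain ⟨k, hk⟩ := (ht.eventually (eventually_ge_atTop ((⌊S (N + 1)⌋ : ℝ) + 1))).exists
      exact absurd hk (not_le.2 (hbdd k))
  simp only [← hSdef, ← Set.not_infinite, key]
  by_cases hT : Tendsto S atTop atTop <;> by_cases hΦ : Φ Δ bl <;> tauto
end

section
/- In the region representation ⟨l, h, P(C)⟩ of a timed automaton region, two valuations κ₁, κ₂ belonging to the same tuple representation are region-equivalent: if κ₁ and κ₂ both satisfy conditions (1)–(6) of the tuple ⟨l, h, (C₋₁, C₀, ..., C_n)⟩, then κ₁ ≅ κ₂. -/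
/-- `κ` belongs to the region tuple given by the integer-part map `h` and
the ordered partition encoded by `idx : C → ℤ` (where `idx x = -1` means
`x ∈ C₋₁`, i.e. `κ x > c x`, and `idx x = i ≥ 0` means `x ∈ Cᵢ`). -/
def InRegionTuple {C : Type*} (c : C → ℕ) (h : C → ℕ) (n : ℕ) (idx : C → ℤ)
    (κ : C → NNReal) : Prop :=
  (∀ x, -1 ≤ idx x ∧ idx x ≤ (n : ℤ)) ∧
  (∀ x, (κ x : ℝ) ≤ c x → ⌊(κ x : ℝ)⌋ = (h x : ℤ)) ∧
  (∀ x, (c x : ℝ) < (κ x : ℝ) → h x = c x) ∧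
  (∀ x y, (κ x : ℝ) ≤ c x → (κ y : ℝ) ≤ c y →
      (Int.fract (κ x : ℝ) < Int.fract (κ y : ℝ) ↔
        (0 ≤ idx x ∧ idx x < idx y))) ∧
  (∀ x, (κ x : ℝ) ≤ c x → (Int.fract (κ x : ℝ) = 0 ↔ idx x = 0)) ∧
  (∀ x, idx x = -1 ↔ (c x : ℝ) < (κ x : ℝ))

/-- Two valuations belonging to the same region tuple (with the same
location, which plays no role for valuations) are region-equivalent. -/
theorem inRegionTuple_regionEquiv {C : Type*} [Fintype C] (c : C → ℕ)
    (h : C → ℕ) (n : ℕ) (idx : C → ℤ) (κ₁ κ₂ : C → NNReal)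
    (h₁ : InRegionTuple c h n idx κ₁) (h₂ : InRegionTuple c h n idx κ₂) :
    RegionEquiv c κ₁ κ₂ := by
  obtain ⟨-, f1, -, o1, z1, b1⟩ := h₁
  obtain ⟨-, f2, -, o2, z2, b2⟩ := h₂
  refine ⟨fun x hx1 hx2 => by rw [f1 x hx1, f2 x hx2],
    fun x y hx1 hy1 hx2 hy2 => ?_,
    fun x hx1 hx2 => by rw [z1 x hx1, z2 x hx2],
    fun x => by rw [← b1 x, ← b2 x]⟩
  rw [← not_lt, ← not_lt, o1 y x hy1 hx1, o2 y x hy2 hx2]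
end
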